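/- arXiv:0906.3838 — 13 statements merged into one kernel-verified Lean document; each statement's English description precedes it below -/
import Mathlib

section
/- Let d be a nonnegative integer and fix integers s,t with 0 ≤ s,t ≤ d. Call a pair (i,j) with 0 ≤ i,j ≤ d 'zigzag' (relative to s,t) if: i is not between s,j; j is not between i,t; and at least one of i,j is not between s,t; where r is 'between' the ordered pair a,b means a ≥ r > b or a ≤ r < b. Then the number of zigzag pairs (i,j) is exactly d + 1 + s(d-s) + t(d-t). -/
open scoped Classical

/-- `r` is between the ordered pair `a,b`: `a ≥ r > b` or `a ≤ r < b`. -/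
def Between (a r b : ℤ) : Prop := (a ≥ r ∧ r > b) ∨ (a ≤ r ∧ r < b)

/-- `(i,j)` is zigzag relative to `(s,t)`. -/
def Zigzag (s t i j : ℤ) : Prop :=
  ¬ Between s i j ∧ ¬ Between i j t ∧ (¬ Between s i t ∨ ¬ Between s j t)

theorem stmt_0 (d s t : ℤ) (hd : 0 ≤ d) (hs0 : 0 ≤ s) (hsd : s ≤ d)
    (ht0 : 0 ≤ t) (htd : t ≤ d) :
    ((((Finset.Icc (0:ℤ) d) ×ˢ (Finset.Icc (0:ℤ) d)).filter
        (fun p : ℤ × ℤ => Zigzag s t p.1 p.2)).card : ℤ)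
      = d + 1 + s * (d - s) + t * (d - t) := by
  rcases lt_trichotomy s t with h | h | h
  · -- s < t
    have hZ : (((Finset.Icc (0:ℤ) d) ×ˢ (Finset.Icc (0:ℤ) d)).filter
        (fun p : ℤ × ℤ => Zigzag s t p.1 p.2))
        = (Finset.Icc (0:ℤ) (s-1) ×ˢ Finset.Icc t d)
          ∪ (Finset.Ioo s t ×ˢ Finset.Icc (0:ℤ) (s-1))
          ∪ (Finset.Icc t d ×ˢ Finset.Icc (0:ℤ) t) := by
      ext ⟨i, j⟩
      simp only [Finset.mem_filter, Finset.mem_product, Finset.mem_union,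
        Finset.mem_Icc, Finset.mem_Ioo, Zigzag, Between, ge_iff_le, gt_iff_lt,
        not_or, not_and, not_lt, not_le]
      constructor
      · rintro ⟨⟨⟨hi0, hid⟩, hj0, hjd⟩, h1, h2, h3⟩; omega
      · intro hmem
        refine ⟨by omega, by omega, by omega, ?_⟩
        omega
    rw [hZ]
    have hd1 : Disjoint (Finset.Icc (0:ℤ) (s-1) ×ˢ Finset.Icc t d)
        (Finset.Ioo s t ×ˢ Finset.Icc (0:ℤ) (s-1)) := by
      rw [Finset.disjoint_left]
      rintro ⟨i, j⟩ hp hq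
      simp only [Finset.mem_product, Finset.mem_Icc, Finset.mem_Ioo] at hp hq
      omega
    have hd2 : Disjoint ((Finset.Icc (0:ℤ) (s-1) ×ˢ Finset.Icc t d)
          ∪ (Finset.Ioo s t ×ˢ Finset.Icc (0:ℤ) (s-1)))
        (Finset.Icc t d ×ˢ Finset.Icc (0:ℤ) t) := by
      rw [Finset.disjoint_left]
      rintro ⟨i, j⟩ hp hq
      simp only [Finset.mem_union, Finset.mem_product, Finset.mem_Icc,
        Finset.mem_Ioo] at hp hq
      omega
    rw [Finset.card_union_of_disjoint hd2, Finset.card_union_of_disjoint hd1]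
    simp only [Finset.card_product, Int.card_Icc, Int.card_Ioo]
    push_cast
    repeat rw [Int.toNat_of_nonneg (by omega)]
    ring
  · -- s = t
    subst h
    have hZ : (((Finset.Icc (0:ℤ) d) ×ˢ (Finset.Icc (0:ℤ) d)).filter
        (fun p : ℤ × ℤ => Zigzag s s p.1 p.2))
        = (Finset.Icc (0:ℤ) (s-1) ×ˢ Finset.Icc s d)
          ∪ ({s} ×ˢ {s})
          ∪ (Finset.Icc (s+1) d ×ˢ Finset.Icc (0:ℤ) s) := by
      ext ⟨i, j⟩
      simp only [Finset.mem_filter, Finset.mem_product, Finset.mem_union,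
        Finset.mem_Icc, Finset.mem_singleton, Zigzag, Between, ge_iff_le,
        gt_iff_lt, not_or, not_and, not_lt, not_le]
      constructor
      · rintro ⟨⟨⟨hi0, hid⟩, hj0, hjd⟩, h1, h2, h3⟩; omega
      · intro hmem
        refine ⟨by omega, by omega, by omega, ?_⟩
        omega
    rw [hZ]
    have hd1 : Disjoint (Finset.Icc (0:ℤ) (s-1) ×ˢ Finset.Icc s d)
        (({s} : Finset ℤ) ×ˢ ({s} : Finset ℤ)) := by
      rw [Finset.disjoint_left]
      rintro ⟨i, j⟩ hp hq
      simp only [Finset.mem_product, Finset.mem_Icc, Finset.mem_singleton] at hp hq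
      omega
    have hd2 : Disjoint ((Finset.Icc (0:ℤ) (s-1) ×ˢ Finset.Icc s d)
          ∪ (({s} : Finset ℤ) ×ˢ ({s} : Finset ℤ)))
        (Finset.Icc (s+1) d ×ˢ Finset.Icc (0:ℤ) s) := by
      rw [Finset.disjoint_left]
      rintro ⟨i, j⟩ hp hq
      simp only [Finset.mem_union, Finset.mem_product, Finset.mem_Icc,
        Finset.mem_singleton] at hp hq
      omega
    rw [Finset.card_union_of_disjoint hd2, Finset.card_union_of_disjoint hd1]
    simp only [Finset.card_product, Int.card_Icc, Finset.card_singleton]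
    push_cast
    rw [Int.toNat_of_nonneg (by omega), Int.toNat_of_nonneg (by omega),
      Int.toNat_of_nonneg (by omega), Int.toNat_of_nonneg (by omega)]
    ring
  · -- t < s
    have hZ : (((Finset.Icc (0:ℤ) d) ×ˢ (Finset.Icc (0:ℤ) d)).filter
        (fun p : ℤ × ℤ => Zigzag s t p.1 p.2))
        = (Finset.Icc (0:ℤ) t ×ˢ Finset.Icc t d)
          ∪ (Finset.Ioo t s ×ˢ Finset.Icc (s+1) d)
          ∪ (Finset.Icc (s+1) d ×ˢ Finset.Icc (0:ℤ) t) := by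
      ext ⟨i, j⟩
      simp only [Finset.mem_filter, Finset.mem_product, Finset.mem_union,
        Finset.mem_Icc, Finset.mem_Ioo, Zigzag, Between, ge_iff_le, gt_iff_lt,
        not_or, not_and, not_lt, not_le]
      constructor
      · rintro ⟨⟨⟨hi0, hid⟩, hj0, hjd⟩, h1, h2, h3⟩; omega
      · intro hmem
        refine ⟨by omega, by omega, by omega, ?_⟩
        omega
    rw [hZ]
    have hd1 : Disjoint (Finset.Icc (0:ℤ) t ×ˢ Finset.Icc t d)
        (Finset.Ioo t s ×ˢ Finset.Icc (s+1) d) := by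
      rw [Finset.disjoint_left]
      rintro ⟨i, j⟩ hp hq
      simp only [Finset.mem_product, Finset.mem_Icc, Finset.mem_Ioo] at hp hq
      omega
    have hd2 : Disjoint ((Finset.Icc (0:ℤ) t ×ˢ Finset.Icc t d)
          ∪ (Finset.Ioo t s ×ˢ Finset.Icc (s+1) d))
        (Finset.Icc (s+1) d ×ˢ Finset.Icc (0:ℤ) t) := by
      rw [Finset.disjoint_left]
      rintro ⟨i, j⟩ hp hq
      simp only [Finset.mem_union, Finset.mem_product, Finset.mem_Icc,
        Finset.mem_Ioo] at hp hq
      omega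
    rw [Finset.card_union_of_disjoint hd2, Finset.card_union_of_disjoint hd1]
    simp only [Finset.card_product, Int.card_Icc, Int.card_Ioo]
    push_cast
    repeat rw [Int.toNat_of_nonneg (by omega)]
    ring
end

section
/- Let d be a nonnegative integer and fix 0 ≤ s,t ≤ d. Define, for 0 ≤ i,j ≤ d, the pair (i,j) to be 'positive' if one of the following holds: (case s < t) 0 ≤ i < s and i ≤ j < t; or s ≤ i < t and s ≤ j < s+t-i; or t < j ≤ i ≤ d; (case s = t) 0 ≤ i ≤ j < s; or s < j ≤ i ≤ d; (case s > t) 0 ≤ i ≤ j < t; or t < i ≤ s and s+t-i < j ≤ s; or s < i ≤ d and t < j ≤ i. Then for each fixed i with 0 ≤ i ≤ d, the number of j with 0 ≤ j ≤ d such that (i,j) is positive equals |i - t|. -/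
open scoped Classical

/-- The pair `(i,j)` is positive relative to `(d,s,t)`. -/
def Positive (d s t i j : ℤ) : Prop :=
  (s < t ∧ ((0 ≤ i ∧ i < s ∧ i ≤ j ∧ j < t)
          ∨ (s ≤ i ∧ i < t ∧ s ≤ j ∧ j < s + t - i)
          ∨ (t < j ∧ j ≤ i ∧ i ≤ d)))
  ∨ (s = t ∧ ((0 ≤ i ∧ i ≤ j ∧ j < s) ∨ (s < j ∧ j ≤ i ∧ i ≤ d)))
  ∨ (s > t ∧ ((0 ≤ i ∧ i ≤ j ∧ j < t)
            ∨ (t < i ∧ i ≤ s ∧ s + t - i < j ∧ j ≤ s)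
            ∨ (s < i ∧ i ≤ d ∧ t < j ∧ j ≤ i)))

lemma card_Ico_int (a b : ℤ) (hab : a ≤ b) : ((Finset.Ico a b).card : ℤ) = b - a := by
  rw [Int.card_Ico, Int.toNat_of_nonneg (by omega)]

theorem stmt_2 (d s t i : ℤ) (hd : 0 ≤ d) (hs0 : 0 ≤ s) (hsd : s ≤ d)
    (ht0 : 0 ≤ t) (htd : t ≤ d) (hi0 : 0 ≤ i) (hid : i ≤ d) :
    (((Finset.Icc (0:ℤ) d).filter (fun j : ℤ => Positive d s t i j)).card : ℤ)
      = |i - t| := by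
  have key : ∀ a b : ℤ, a ≤ b → b - a = |i - t| →
      (Finset.Icc (0:ℤ) d).filter (fun j : ℤ => Positive d s t i j) = Finset.Ico a b →
      (((Finset.Icc (0:ℤ) d).filter (fun j : ℤ => Positive d s t i j)).card : ℤ) = |i - t| := by
    intro a b hab hba he
    rw [he, card_Ico_int a b hab, hba]
  rcases lt_trichotomy s t with h | h | h
  · rcases lt_or_ge i s with h1 | h1
    · refine key i t (by omega) ?_ ?_
      · rw [abs_of_nonpos (by omega)]; ring
      · ext j
        rw [Finset.mem_filter]; simp only [Finset.mem_filter, Finset.mem_Icc, Finset.mem_Ico, Positive]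
        omega
    · rcases lt_or_ge i t with h2 | h2
      · refine key s (s + t - i) (by omega) ?_ ?_
        · rw [abs_of_nonpos (by omega)]; ring
        · ext j
          rw [Finset.mem_filter]; simp only [Finset.mem_filter, Finset.mem_Icc, Finset.mem_Ico, Positive]
          omega
      · refine key (t + 1) (i + 1) (by omega) ?_ ?_
        · rw [abs_of_nonneg (by omega)]; ring
        · ext j
          rw [Finset.mem_filter]; simp only [Finset.mem_filter, Finset.mem_Icc, Finset.mem_Ico, Positive]
          omega
  · rcases lt_or_ge i s with h1 | h1
    · refine key i s (by omega) ?_ ?_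
      · rw [abs_of_nonpos (by omega)]; omega
      · ext j
        rw [Finset.mem_filter]; simp only [Finset.mem_filter, Finset.mem_Icc, Finset.mem_Ico, Positive]
        omega
    · refine key (s + 1) (i + 1) (by omega) ?_ ?_
      · rw [abs_of_nonneg (by omega)]; omega
      · ext j
        rw [Finset.mem_filter]; simp only [Finset.mem_filter, Finset.mem_Icc, Finset.mem_Ico, Positive]
        omega
  · rcases le_or_gt i t with h1 | h1
    · refine key i t (by omega) ?_ ?_
      · rw [abs_of_nonpos (by omega)]; ring
      · ext j
        rw [Finset.mem_filter]; simp only [Finset.mem_filter, Finset.mem_Icc, Finset.mem_Ico, Positive]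
        omega
    · rcases le_or_gt i s with h2 | h2
      · refine key (s + t - i + 1) (s + 1) (by omega) ?_ ?_
        · rw [abs_of_nonneg (by omega)]; ring
        · ext j
          rw [Finset.mem_filter]; simp only [Finset.mem_filter, Finset.mem_Icc, Finset.mem_Ico, Positive]
          omega
      · refine key (t + 1) (i + 1) (by omega) ?_ ?_
        · rw [abs_of_nonneg (by omega)]; ring
        · ext j
          rw [Finset.mem_filter]; simp only [Finset.mem_filter, Finset.mem_Icc, Finset.mem_Ico, Positive]
          omega
end

section
/- Let d be a nonnegative integer and fix 0 ≤ s,t ≤ d. Call (i,j) ∈ {0,...,d}² zigzag if i is not between s,j, j is not between i,t, and at least one of i,j is not between s,t (where r is between a,b means a ≥ r > b or a ≤ r < b). Call (i,j) positive if it satisfies the conditions of Definition 'positive' (case s<t: 0≤i<s and i≤j<t, or s≤i<t and s≤j<s+t-i, or t<j≤i≤d; case s=t: 0≤i≤j<s or s<j≤i≤d; case s>t: 0≤i≤j<t, or t<i≤s and s+t-i<j≤s, or s<i≤d and t<j≤i). Call (i,j) negative if it is neither zigzag nor positive. Then for each fixed j with 0 ≤ j ≤ d, the number of i with 0 ≤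 i ≤ d such that (i,j) is negative equals |j - s|. -/
open scoped Classical

/-- The pair `(i,j)` is negative: neither zigzag nor positive. -/
def Negative (d s t i j : ℤ) : Prop :=
  ¬ Zigzag s t i j ∧ ¬ Positive d s t i j

theorem stmt_3 (d s t j : ℤ) (hd : 0 ≤ d) (hs0 : 0 ≤ s) (hsd : s ≤ d)
    (ht0 : 0 ≤ t) (htd : t ≤ d) (hj0 : 0 ≤ j) (hjd : j ≤ d) :
    (((Finset.Icc (0:ℤ) d).filter (fun i : ℤ => Negative d s t i j)).card : ℤ)
      = |j - s| := by
  have hfin : ∀ a b : ℤ,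
      ((Finset.Icc (0:ℤ) d).filter (fun i : ℤ => Negative d s t i j)
        = Finset.Icc a b) → b + 1 - a = |j - s| →
      (((Finset.Icc (0:ℤ) d).filter (fun i : ℤ => Negative d s t i j)).card : ℤ)
        = |j - s| := by
    intro a b h1 h2
    rw [h1, Int.card_Icc]
    rw [Int.toNat_of_nonneg (by rw [h2]; exact abs_nonneg _)]
    exact h2
  by_cases hsj : s ≤ j
  · have habs : |j - s| = j - s := abs_of_nonneg (by omega)
    by_cases hmid : s < j ∧ j < t
    · refine hfin (s + t - j) (t - 1) ?_ (by omega)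
      ext i : 1
      rw [Finset.mem_filter]; simp only [Finset.mem_filter, Finset.mem_Icc, Negative, Zigzag, Positive, Between]
      constructor
      · rintro ⟨h1, h2⟩; omega
      · intro h; refine ⟨by omega, ?_, ?_⟩ <;> omega
    · refine hfin s (j - 1) ?_ (by omega)
      ext i : 1
      rw [Finset.mem_filter]; simp only [Finset.mem_filter, Finset.mem_Icc, Negative, Zigzag, Positive, Between]
      constructor
      · rintro ⟨h1, h2⟩; omega
      · intro h; refine ⟨by omega, ?_, ?_⟩ <;> omega
  · have habs : |j - s| = s - j := by rw [abs_of_neg (by omega)]; ring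
    by_cases hmid : t < j ∧ j < s
    · refine hfin (t + 1) (s + t - j) ?_ (by omega)
      ext i : 1
      rw [Finset.mem_filter]; simp only [Finset.mem_filter, Finset.mem_Icc, Negative, Zigzag, Positive, Between]
      constructor
      · rintro ⟨h1, h2⟩; omega
      · intro h; refine ⟨by omega, ?_, ?_⟩ <;> omega
    · refine hfin (j + 1) s ?_ (by omega)
      ext i : 1
      rw [Finset.mem_filter]; simp only [Finset.mem_filter, Finset.mem_Icc, Negative, Zigzag, Positive, Between]
      constructor
      · rintro ⟨h1, h2⟩; omega
      · intro h; refine ⟨by omega, ?_, ?_⟩ <;> omega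
end

section
/- Let x₁,...,xₙ (n ≥ 1) be a sequence of integers. Say r is between the ordered pair a,b if a ≥ r > b or a ≤ r < b. Then the following are equivalent: (A) for 2 ≤ i ≤ n-1, x_i is not between x_{i-1}, x_{i+1}, and for 3 ≤ i ≤ n-1, at least one of x_{i-1}, x_i is not between x_{i-2}, x_{i+1}; (B) for 2 ≤ i ≤ n-1, (x_{i-1} - x_i) and (x_i - x_{i+1}) have opposite sign (product ≤ 0), and for 2 ≤ i ≤ n-1, if |x_{i-1} - x_i| < |x_i - x_{i+1}| then 0 < |x₁ - x₂| < |x₂ - x₃| < ⋯ < |x_i - x_{i+1}|. -/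
lemma nb_prod (a r b : ℤ) (h : ¬ Between a r b) : (a - r) * (r - b) ≤ 0 := by
  unfold Between at h
  push_neg at h
  rcases le_total r a with h1 | h1
  · have := h.1 h1
    nlinarith
  · have := h.2 h1
    nlinarith

lemma nb_cases (a r b : ℤ) (h : ¬ Between a r b) : r = b ∨ (a - r) * (r - b) < 0 := by
  unfold Between at h
  push_neg at h
  rcases lt_trichotomy r b with h1 | h1 | h1
  · right
    have h2 : ¬ a ≤ r := fun hle => absurd h1 (not_lt.2 (h.2 hle))
    push_neg at h2
    nlinarith
  · exact Or.inl h1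
  · right
    have h2 : ¬ r ≤ a := fun hle => absurd h1 (not_lt.2 (h.1 hle))
    push_neg at h2
    nlinarith

lemma keystep (w a r b : ℤ)
    (hA2 : ¬ Between w a b ∨ ¬ Between w r b)
    (hp1 : a = r ∨ (w - a) * (a - r) < 0)
    (hp2 : r = b ∨ (a - r) * (r - b) < 0)
    (habs : |a - r| < |r - b|) : |w - a| < |a - r| := by
  have hrb : r ≠ b := by
    rintro rfl
    simp at habs
    exact absurd habs (not_lt.2 (abs_nonneg _))
  rcases hp2 with h | hprod2
  · exact absurd h hrb
  have har : a ≠ r := by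
    rintro rfl
    simp at hprod2
  rcases hp1 with h | hprod1
  · exact absurd h har
  rcases lt_trichotomy r b with hg | hg | hg
  · -- r < b : a - r > 0, w - a < 0
    have hf : 0 < a - r := by nlinarith
    have he : w - a < 0 := by nlinarith
    have hab : a < b := by
      rw [abs_of_pos hf, abs_of_neg (by linarith : r - b < 0)] at habs
      linarith
    have hb1 : Between w a b := Or.inr ⟨by linarith, hab⟩
    rcases hA2 with h | h
    · exact absurd hb1 h
    · unfold Between at h
      push_neg at h
      have hwr : ¬ w ≤ r := fun hle => absurd hg (not_lt.2 (h.2 hle))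
      push_neg at hwr
      rw [abs_of_neg he, abs_of_pos hf]
      linarith
  · exact absurd hg hrb
  · -- r > b : a - r < 0, w - a > 0
    have hf : a - r < 0 := by nlinarith
    have he : 0 < w - a := by nlinarith
    have hab : b < a := by
      rw [abs_of_neg hf, abs_of_pos (by linarith : 0 < r - b)] at habs
      linarith
    have hb1 : Between w a b := Or.inl ⟨by linarith, hab⟩
    rcases hA2 with h | h
    · exact absurd hb1 h
    · unfold Between at h
      push_neg at h
      have hwr : ¬ r ≤ w := fun hle => absurd hg (not_lt.2 (h.1 hle))
      push_neg at hwr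
      rw [abs_of_pos he, abs_of_neg hf]
      linarith

lemma backA2 (w a r b : ℤ)
    (hB1 : (a - r) * (r - b) ≤ 0)
    (hchain : |a - r| < |r - b| → |w - a| < |a - r|)
    (hb1 : Between w a b) (hb2 : Between w r b) : False := by
  rcases hb2 with ⟨hwr, hrb⟩ | ⟨hwr, hrb⟩
  · -- r > b, w ≥ r
    have hf : a - r ≤ 0 := by nlinarith
    rcases hb1 with ⟨_, hab⟩ | ⟨hwa, hab⟩
    · have hfg : |a - r| < |r - b| := by
        rw [abs_of_nonpos hf, abs_of_pos (by linarith : 0 < r - b)]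
        linarith
      have h1 := hchain hfg
      rw [abs_of_nonpos hf] at h1
      have h2 := le_abs_self (w - a)
      linarith
    · linarith
  · -- r < b, w ≤ r
    have hf : 0 ≤ a - r := by nlinarith
    rcases hb1 with ⟨hwa, hab⟩ | ⟨hwa, hab⟩
    · linarith
    · have hfg : |a - r| < |r - b| := by
        rw [abs_of_nonneg hf, abs_of_neg (by linarith : r - b < 0)]
        linarith
      have h1 := hchain hfg
      rw [abs_of_nonneg hf] at h1
      have h2 := le_abs_self (a - w)
      rw [← abs_sub_comm] at h2
      linarith

theorem stmt_6 (n : ℕ) (x : ℕ → ℤ) (hn : 1 ≤ n) :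
    ((∀ i, 2 ≤ i → i ≤ n - 1 → ¬ Between (x (i - 1)) (x i) (x (i + 1))) ∧
     (∀ i, 3 ≤ i → i ≤ n - 1 →
        (¬ Between (x (i - 2)) (x (i - 1)) (x (i + 1)) ∨
         ¬ Between (x (i - 2)) (x i) (x (i + 1)))))
    ↔
    ((∀ i, 2 ≤ i → i ≤ n - 1 → (x (i - 1) - x i) * (x i - x (i + 1)) ≤ 0) ∧
     (∀ i, 2 ≤ i → i ≤ n - 1 →
        |x (i - 1) - x i| < |x i - x (i + 1)| →
        (0 < |x 1 - x 2| ∧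
          ∀ j, 1 ≤ j → j + 1 ≤ i →
            |x j - x (j + 1)| < |x (j + 1) - x (j + 2)|))) := by
  constructor
  · rintro ⟨hA1, hA2⟩
    constructor
    · exact fun i h2 hle => nb_prod _ _ _ (hA1 i h2 hle)
    · intro i h2 hle habs
      have chain : ∀ k, ∀ j, j + 1 + k = i → 1 ≤ j →
          |x j - x (j + 1)| < |x (j + 1) - x (j + 2)| := by
        intro k
        induction k with
        | zero =>
          intro j hj _
          obtain rfl : i = j + 1 := by omega
          exact habs
        | succ k ih =>
          intro j hj h1
          have hP := ih (j + 1) (by omega) (by omega)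
          have hA2' : ¬ Between (x j) (x (j + 1)) (x (j + 3)) ∨
              ¬ Between (x j) (x (j + 2)) (x (j + 3)) :=
            hA2 (j + 2) (by omega) (by omega)
          have hp1 := nb_cases _ _ _ (hA1 (j + 1) (by omega) (by omega))
          have hp2 := nb_cases _ _ _ (hA1 (j + 2) (by omega) (by omega))
          exact keystep (x j) (x (j + 1)) (x (j + 2)) (x (j + 3)) hA2'
            (by rcases hp1 with h | h
                · exact Or.inl h
                · exact Or.inr h)
            (by rcases hp2 with h | h
                · exact Or.inl h
                · exact Or.inr h) hP
      have chain' : ∀ j, 1 ≤ j → j + 1 ≤ i →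
          |x j - x (j + 1)| < |x (j + 1) - x (j + 2)| :=
        fun j h1 hj => chain (i - (j + 1)) j (by omega) h1
      refine ⟨?_, chain'⟩
      have h12 : |x 1 - x 2| < |x 2 - x 3| := chain' 1 le_rfl (by omega)
      have hc := nb_cases _ _ _ (hA1 2 le_rfl (by omega))
      rcases hc with h | h
      · rw [show (3:ℕ) = 2 + 1 from rfl, ← h] at h12
        simp at h12
        exact absurd h12 (not_lt.2 (abs_nonneg _))
      · have : x 1 - x 2 ≠ 0 := by
          rintro h0
          rw [show (2:ℕ) - 1 = 1 from rfl] at h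
          rw [h0] at h
          simp at h
        exact abs_pos.2 this
  · rintro ⟨hB1, hB2⟩
    constructor
    · intro i h2 hle hb
      obtain ⟨k, rfl⟩ : ∃ k, i = k + 2 := ⟨i - 2, by omega⟩
      have hprod := hB1 (k + 2) h2 hle
      simp only [show k + 2 - 1 = k + 1 from rfl, show k + 2 + 1 = k + 3 from rfl]
        at hprod hb
      have he0 : x (k + 1) - x (k + 2) = 0 ∧ x (k + 2) - x (k + 3) ≠ 0 := by
        rcases hb with ⟨hwa, hab⟩ | ⟨hwa, hab⟩
        · constructor
          · nlinarith [hprod]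
          · intro h0; omega
        · constructor
          · nlinarith [hprod]
          · intro h0; omega
      have habs : |x (k + 1) - x (k + 2)| < |x (k + 2) - x (k + 3)| := by
        rw [he0.1]
        simpa using abs_pos.2 he0.2
      obtain ⟨hpos, hch⟩ := hB2 (k + 2) h2 hle habs
      rcases k with _ | m
      · rw [he0.1] at hpos
        simp at hpos
      · have := hch (m + 1) (by omega) (by omega)
        rw [he0.1] at this
        simp at this
        exact absurd this (not_lt.2 (abs_nonneg _))
    · intro i h3 hle
      by_contra h
      push_neg at h
      obtain ⟨hb1, hb2⟩ := h
      obtain ⟨k, rfl⟩ : ∃ k, i = k + 3 := ⟨i - 3, by omega⟩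
      exact backA2 (x (k + 1)) (x (k + 2)) (x (k + 3)) (x (k + 4))
        (hB1 (k + 3) (by omega) hle)
        (fun hfg => (hB2 (k + 3) (by omega) hle hfg).2 (k + 1) (by omega) (by omega))
        hb1 hb2
end

section
/- Fix an integer d ≥ 0 and an integer s with 0 ≤ s ≤ d. Consider finite sequences of integers x₁, x₂, ..., xₙ (n ≥ 1) with x₁ = s, xₙ = 0, x_i > 0 for 1 ≤ i ≤ n-1, 0 ≤ x_i ≤ d for all i, and such that the sequence is zigzag: for 2 ≤ i ≤ n-1, x_i is not between x_{i-1},x_{i+1}, and for 3 ≤ i ≤ n-1, at least one of x_{i-1},x_i is not between x_{i-2},x_{i+1} (where r is between a,b means a ≥ r > b or a ≤ r < b). Then the number of such sequences is exactly the binomial coefficient C(d,s). -/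
/-- `r` is between the ordered pair `a,b`: `a ≥ r > b` or `a ≤ r < b`. -/
def BetweenN (a r b : ℕ) : Prop := (a ≥ r ∧ r > b) ∨ (a ≤ r ∧ r < b)

/-- Index sequences (as lists, 0-indexed) of nonredundant lifting words:
nonempty, last entry `0`, all entries but the last positive, all entries `≤ d`,
and zigzag. -/
def LiftSeq (d : ℕ) (l : List ℕ) : Prop :=
  l ≠ [] ∧ l.getLast? = some 0 ∧
  (∀ i, i + 1 < l.length → 0 < l.getD i 0) ∧
  (∀ i, i < l.length → l.getD i 0 ≤ d) ∧
  (∀ i, 1 ≤ i → i + 1 < l.length →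
    ¬ BetweenN (l.getD (i - 1) 0) (l.getD i 0) (l.getD (i + 1) 0)) ∧
  (∀ i, 2 ≤ i → i + 1 < l.length →
    (¬ BetweenN (l.getD (i - 2) 0) (l.getD (i - 1) 0) (l.getD (i + 1) 0) ∨
     ¬ BetweenN (l.getD (i - 2) 0) (l.getD i 0) (l.getD (i + 1) 0)))

def tails (d : ℕ) : ℕ → ℕ → Finset (List ℕ)
  | vb, pb =>
    insert [0] ((Finset.Ico 1 vb ×ˢ Finset.Ioc pb d).attach.biUnion
      (fun vp => (tails d vp.1.1 vp.1.2).image (fun t => vp.1.1 :: vp.1.2 :: t)))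
  termination_by vb _ => vb
  decreasing_by
    have h := vp.2
    rw [Finset.mem_product, Finset.mem_Ico] at h
    exact h.1.2

lemma mem_tails {d vb pb : ℕ} {t : List ℕ} :
    t ∈ tails d vb pb ↔ t = [0] ∨ ∃ v p t', 1 ≤ v ∧ v < vb ∧ pb < p ∧ p ≤ d ∧
      t' ∈ tails d v p ∧ t = v :: p :: t' := by
  rw [tails]
  simp only [Finset.mem_insert, Finset.mem_biUnion, Finset.mem_attach, Finset.mem_image,
    true_and, Subtype.exists, Finset.mem_product, Finset.mem_Ico, Finset.mem_Ioc]
  constructor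
  · rintro (h | ⟨⟨v, p⟩, ⟨⟨h1, h2⟩, h3, h4⟩, t', ht', rfl⟩)
    · exact Or.inl h
    · exact Or.inr ⟨v, p, t', h1, h2, h3, h4, ht', rfl⟩
  · rintro (h | ⟨v, p, t', h1, h2, h3, h4, ht', rfl⟩)
    · exact Or.inl h
    · exact Or.inr ⟨⟨v, p⟩, ⟨⟨h1, h2⟩, h3, h4⟩, t', ht', rfl⟩

lemma zz_hockey (r : ℕ) : ∀ b, ∑ k ∈ Finset.range b, (r + k).choose r = (r + b).choose (r + 1) := by
  intro b
  induction b with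
  | zero => simp
  | succ b ih =>
    rw [Finset.sum_range_succ, ih]
    have h : (r + (b + 1)).choose (r + 1) = (r + b).choose r + (r + b).choose (r + 1) := by
      rw [show r + (b + 1) = (r + b) + 1 from by omega]
      exact Nat.choose_succ_succ _ _
    omega

lemma zz_key_sum (b : ℕ) : ∀ a, 1 + ∑ j ∈ Finset.range a, (j + b).choose (j + 1) = (a + b).choose a := by
  intro a
  induction a with
  | zero => simp
  | succ a ih =>
    rw [Finset.sum_range_succ]
    have h : (a + 1 + b).choose (a + 1) = (a + b).choose a + (a + b).choose (a + 1) := by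
      rw [show a + 1 + b = (a + b) + 1 from by omega]
      exact Nat.choose_succ_succ _ _
    omega

lemma zz_inner_sum (r b : ℕ) : ∑ k ∈ Finset.range b, (r + (b - 1 - k)).choose r = (r + b).choose (r + 1) := by
  rw [Finset.sum_range_reflect (fun k => (r + k).choose r) b]
  exact zz_hockey r b

lemma card_tails (d : ℕ) : ∀ vb pb, (tails d vb pb).card = ((vb - 1) + (d - pb)).choose (vb - 1) := by
  intro vb
  induction vb using Nat.strong_induction_on with
  | _ vb ih =>
    intro pb
    rw [tails]
    rw [Finset.card_insert_of_notMem, Finset.card_biUnion]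
    · have hcard : ∀ vp : {x // x ∈ Finset.Ico 1 vb ×ˢ Finset.Ioc pb d},
          ((tails d vp.1.1 vp.1.2).image (fun t => vp.1.1 :: vp.1.2 :: t)).card
          = ((vp.1.1 - 1) + (d - vp.1.2)).choose (vp.1.1 - 1) := by
        rintro ⟨⟨v, p⟩, hvp⟩
        rw [Finset.mem_product, Finset.mem_Ico] at hvp
        rw [Finset.card_image_of_injective _ (fun a b h => by simpa using h)]
        exact ih v hvp.1.2 p
      rw [Finset.sum_congr rfl (fun vp _ => hcard vp)]
      rw [Finset.sum_attach (Finset.Ico 1 vb ×ˢ Finset.Ioc pb d)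
        (fun vp => ((vp.1 - 1) + (d - vp.2)).choose (vp.1 - 1))]
      rw [Finset.sum_product]
      have hIoc : Finset.Ioc pb d = Finset.Ico (pb + 1) (d + 1) := by
        ext x; simp [Nat.lt_succ_iff, Nat.succ_le_iff]
      have hinner : ∀ v, 1 ≤ v → ∑ p ∈ Finset.Ioc pb d, ((v - 1) + (d - p)).choose (v - 1)
          = ((v - 1) + (d - pb)).choose v := by
        intro v hv
        rw [hIoc, Finset.sum_Ico_eq_sum_range]
        have h1 : d + 1 - (pb + 1) = d - pb := by omega
        rw [h1]
        have h2 : ∀ k ∈ Finset.range (d - pb),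
            ((v - 1) + (d - (pb + 1 + k))).choose (v - 1)
            = ((v - 1) + ((d - pb) - 1 - k)).choose (v - 1) := by
          intro k hk
          congr 2
          omega
        rw [Finset.sum_congr rfl h2, zz_inner_sum]
        congr 1
        omega
      rw [Finset.sum_congr rfl (fun v hv => hinner v (Finset.mem_Ico.mp hv).1)]
      rw [Finset.sum_Ico_eq_sum_range]
      have h3 : ∀ j ∈ Finset.range (vb - 1),
          ((1 + j - 1) + (d - pb)).choose (1 + j) = (j + (d - pb)).choose (j + 1) := by
        intro j _
        have e1 : 1 + j - 1 = j := by omega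
        rw [e1, Nat.add_comm 1 j]
      rw [Finset.sum_congr rfl h3]
      have := zz_key_sum (d - pb) (vb - 1)
      omega
    · rintro ⟨⟨v, p⟩, hvp⟩ _ ⟨⟨v', p'⟩, hvp'⟩ _ hne
      simp only [Finset.disjoint_left, Finset.mem_image]
      rintro x ⟨t, _, rfl⟩ ⟨t', _, h⟩
      simp only [List.cons.injEq] at h
      exact hne (by simp [Subtype.ext_iff, Prod.ext_iff, h.1, h.2.1])
    · intro h
      simp only [Finset.mem_biUnion, Finset.mem_image] at h
      obtain ⟨vp, -, t, -, ht⟩ := h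
      simp at ht

lemma getLast?_cons_ne {a : ℕ} {t : List ℕ} (ht : t ≠ []) :
    (a :: t).getLast? = t.getLast? := by
  obtain ⟨b, u, rfl⟩ := List.exists_cons_of_ne_nil ht
  exact List.getLast?_cons_cons

lemma liftSeq_cons_iff {d a : ℕ} {t : List ℕ} (ht : t ≠ []) :
    LiftSeq d (a :: t) ↔ LiftSeq d t ∧ 0 < a ∧ a ≤ d ∧
      (2 ≤ t.length → ¬ BetweenN a (t.getD 0 0) (t.getD 1 0)) ∧
      (3 ≤ t.length → (¬ BetweenN a (t.getD 0 0) (t.getD 2 0) ∨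
        ¬ BetweenN a (t.getD 1 0) (t.getD 2 0))) := by
  have hlt : 0 < t.length := List.length_pos_iff.mpr ht
  constructor
  · rintro ⟨-, h2, h3, h4, h5, h6⟩
    rw [getLast?_cons_ne ht] at h2
    refine ⟨⟨ht, h2, ?_, ?_, ?_, ?_⟩, ?_, ?_, ?_, ?_⟩
    · intro i hi
      have := h3 (i + 1) (by simp only [List.length_cons]; omega)
      simpa using this
    · intro i hi
      have := h4 (i + 1) (by simp only [List.length_cons]; omega)
      simpa using this
    · intro i hi1 hi2
      obtain ⟨j, rfl⟩ : ∃ j, i = j + 1 := ⟨i - 1, by omega⟩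
      have := h5 (j + 2) (by omega) (by simp only [List.length_cons]; omega)
      have e : j + 2 - 1 = j + 1 := by omega
      rw [e] at this
      simpa using this
    · intro i hi1 hi2
      obtain ⟨j, rfl⟩ : ∃ j, i = j + 2 := ⟨i - 2, by omega⟩
      have := h6 (j + 3) (by omega) (by simp only [List.length_cons]; omega)
      have e1 : j + 3 - 2 = j + 1 := by omega
      have e2 : j + 3 - 1 = j + 2 := by omega
      rw [e1, e2] at this
      simpa using this
    · have := h3 0 (by simp only [List.length_cons]; omega)
      simpa using this
    · have := h4 0 (by simp only [List.length_cons]; omega)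
      simpa using this
    · intro hlen
      have := h5 1 (by omega) (by simp only [List.length_cons]; omega)
      simpa using this
    · intro hlen
      have := h6 2 (by omega) (by simp only [List.length_cons]; omega)
      simpa using this
  · rintro ⟨⟨-, h2, h3, h4, h5, h6⟩, hpos, hle, hw3, hw4⟩
    refine ⟨List.cons_ne_nil _ _, by rwa [getLast?_cons_ne ht], ?_, ?_, ?_, ?_⟩
    · rintro (_ | i) hi
      · simpa using hpos
      · simp only [List.getD_cons_succ]
        exact h3 i (by simp only [List.length_cons] at hi; omega)
    · rintro (_ | i) hi
      · simpa using hle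
      · simp only [List.getD_cons_succ]
        exact h4 i (by simp only [List.length_cons] at hi; omega)
    · rintro (_ | _ | j) hi1 hi2
      · omega
      · simp only [List.length_cons] at hi2
        simpa using hw3 (by omega)
      · have e : j + 1 + 1 - 1 = j + 1 := by omega
        rw [e]
        simp only [List.getD_cons_succ, List.length_cons] at *
        exact h5 (j + 1) (by omega) (by omega)
    · rintro (_ | _ | _ | j) hi1 hi2
      · omega
      · omega
      · simp only [List.length_cons] at hi2
        have e : (2 : ℕ) - 2 = 0 := rfl
        simpa using hw4 (by omega)
      · have e1 : j + 3 - 2 = j + 1 := by omega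
        have e2 : j + 3 - 1 = j + 2 := by omega
        rw [e1, e2]
        simp only [List.getD_cons_succ, List.length_cons] at *
        exact h6 (j + 2) (by omega) (by omega)

lemma liftSeq_single {d : ℕ} : LiftSeq d [0] := by
  refine ⟨by simp, by simp, ?_, ?_, ?_, ?_⟩
  · intro i hi; simp at hi
  · intro i hi
    simp only [List.length_singleton] at hi
    interval_cases i
    simp
  · intro i hi1 hi2; simp at hi2
  · intro i hi1 hi2; simp at hi2

lemma liftSeq_last {d : ℕ} {l : List ℕ} (h : LiftSeq d l) :
    l.getD (l.length - 1) 0 = 0 := by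
  have h2 := h.2.1
  rw [List.getLast?_eq_getElem?] at h2
  rw [List.getD_eq_getElem?_getD, h2]
  rfl

lemma liftSeq_pos_lt {d : ℕ} {l : List ℕ} (h : LiftSeq d l) {i : ℕ}
    (hi : i < l.length) (hp : 0 < l.getD i 0) : i + 1 < l.length := by
  rcases Nat.lt_or_ge (i + 1) l.length with h' | h'
  · exact h'
  · have : i = l.length - 1 := by omega
    rw [this, liftSeq_last h] at hp
    omega

lemma liftSeq_adj_ne {d : ℕ} {l : List ℕ} (h : LiftSeq d l) :
    ∀ i, i + 1 < l.length → l.getD i 0 ≠ l.getD (i + 1) 0 := by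
  suffices H : ∀ k i, l.length ≤ i + k → i + 1 < l.length →
      l.getD i 0 ≠ l.getD (i + 1) 0 by
    intro i hi
    exact H l.length i (by omega) hi
  intro k
  induction k with
  | zero => intro i h1 h2; omega
  | succ k ih =>
    intro i h1 h2 heq
    rcases Nat.lt_or_ge (i + 2) l.length with h3 | h3
    · have hw := h.2.2.2.2.1 (i + 1) (by omega) (by omega)
      have e : i + 1 - 1 = i := by omega
      rw [e] at hw
      have heq2 : l.getD (i + 1) 0 = l.getD (i + 1 + 1) 0 := by
        simp only [BetweenN] at hw
        omega
      exact ih (i + 1) (by omega) (by omega) heq2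
    · have hlast := liftSeq_last h
      rw [show l.length - 1 = i + 1 from by omega] at hlast
      have hp := h.2.2.1 i h2
      omega

lemma liftSeq_descent {d : ℕ} {l : List ℕ} (h : LiftSeq d l) (j : ℕ)
    (hlen : j + 2 < l.length) (h0 : 0 < l.getD (j+1) 0)
    (hlt : l.getD (j+1) 0 < l.getD (j+2) 0)
    (hle : l.getD (j+2) 0 ≤ l.getD j 0) : False := by
  suffices H : ∀ k j, l.length ≤ j + k → j + 2 < l.length → 0 < l.getD (j+1) 0 →
      l.getD (j+1) 0 < l.getD (j+2) 0 → l.getD (j+2) 0 ≤ l.getD j 0 → False by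
    exact H l.length j (by omega) hlen h0 hlt hle
  intro k
  induction k with
  | zero => intro j h1 h2 _ _ _; omega
  | succ k ih =>
    intro j h1 h2 hp hlt hle
    have hp2 : 0 < l.getD (j+2) 0 := by omega
    have hlen3 : j + 3 < l.length := by
      have := liftSeq_pos_lt h (show j + 2 < l.length by omega) hp2; omega
    have hw3 := h.2.2.2.2.1 (j+2) (by omega) (by omega)
    rw [show j+2-1 = j+1 from by omega, show j+2+1 = j+3 from rfl] at hw3
    have hne := liftSeq_adj_ne h (j+2) (by omega)
    rw [show j+2+1 = j+3 from rfl] at hne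
    have h23 : l.getD (j+3) 0 < l.getD (j+2) 0 := by
      simp only [BetweenN] at hw3; omega
    have hw4 := h.2.2.2.2.2 (j+2) (by omega) (by omega)
    rw [show j+2-2 = j from by omega, show j+2-1 = j+1 from by omega,
      show j+2+1 = j+3 from rfl] at hw4
    have hge : l.getD (j+1) 0 ≤ l.getD (j+3) 0 := by
      rcases hw4 with hw | hw <;> (simp only [BetweenN] at hw; omega)
    have hp3 : 0 < l.getD (j+3) 0 := by omega
    have hlen4 : j + 4 < l.length := by
      have := liftSeq_pos_lt h (show j + 3 < l.length by omega) hp3; omega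
    have hw3b := h.2.2.2.2.1 (j+3) (by omega) (by omega)
    rw [show j+3-1 = j+2 from by omega, show j+3+1 = j+4 from rfl] at hw3b
    have hne2 := liftSeq_adj_ne h (j+3) (by omega)
    rw [show j+3+1 = j+4 from rfl] at hne2
    have h34 : l.getD (j+3) 0 < l.getD (j+4) 0 := by
      simp only [BetweenN] at hw3b; omega
    have hw4b := h.2.2.2.2.2 (j+3) (by omega) (by omega)
    rw [show j+3-2 = j+1 from by omega, show j+3-1 = j+2 from by omega,
      show j+3+1 = j+4 from rfl] at hw4b
    have hle2 : l.getD (j+4) 0 ≤ l.getD (j+2) 0 := by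
      rcases hw4b with hw | hw <;> (simp only [BetweenN] at hw; omega)
    exact ih (j+2) (by omega) (by omega) hp3 h34 hle2

lemma tails_sound (d : ℕ) : ∀ vb pb t, t ∈ tails d vb pb → 1 ≤ vb → vb ≤ pb → pb ≤ d →
    LiftSeq d t ∧ t ≠ [] ∧ t.getD 0 0 < vb ∧ (1 < t.length → pb < t.getD 1 0) ∧
    (2 < t.length → t.getD 2 0 < t.getD 0 0) := by
  intro vb
  induction vb using Nat.strong_induction_on with
  | _ vb ih =>
    intro pb t ht h1 h2 h3
    rw [mem_tails] at ht
    rcases ht with rfl | ⟨v, p, t', hv1, hv2, hp1, hp2, ht', rfl⟩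
    · refine ⟨liftSeq_single, by simp, by simpa using (show 0 < vb by omega), by simp, by simp⟩
    · obtain ⟨hL', hne', h0', h1', h2'⟩ := ih v hv2 p t' ht' hv1 (by omega) hp2
      have hLp : LiftSeq d (p :: t') := by
        rw [liftSeq_cons_iff hne']
        refine ⟨hL', by omega, hp2, ?_, ?_⟩
        · intro hlen
          have ha := h1' (by omega)
          simp only [BetweenN]
          omega
        · intro hlen
          right
          have ha := h1' (by omega)
          have hb := h2' (by omega)
          simp only [BetweenN]
          omega
      have hL : LiftSeq d (v :: p :: t') := by
        rw [liftSeq_cons_iff (List.cons_ne_nil _ _)]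
        refine ⟨hLp, by omega, by omega, ?_, ?_⟩
        · intro _
          simp only [List.getD_cons_zero, List.getD_cons_succ, BetweenN]
          omega
        · intro hlen
          right
          have ha := h1' (by simp only [List.length_cons] at hlen; omega)
          simp only [List.getD_cons_zero, List.getD_cons_succ, BetweenN]
          omega
      refine ⟨hL, List.cons_ne_nil _ _, by simpa using hv2, ?_, ?_⟩
      · intro _
        simp only [List.getD_cons_succ, List.getD_cons_zero]
        exact hp1
      · intro hlen
        simp only [List.getD_cons_succ, List.getD_cons_zero]
        exact h0'

lemma tails_complete (d : ℕ) : ∀ n t v p, t.length ≤ n → t ≠ [] → 0 < v → v < p →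
    LiftSeq d (v :: p :: t) → t ∈ tails d v p := by
  intro n
  induction n with
  | zero =>
    intro t v p h1 h2 _ _ _
    have := List.length_pos_iff.mpr h2
    omega
  | succ n ih =>
    intro t v p hlen hne hv hvp hL
    obtain ⟨t0, u, rfl⟩ := List.exists_cons_of_ne_nil hne
    rcases Nat.eq_zero_or_pos t0 with rfl | ht0
    · have hu : u = [] := by
        by_contra hu
        have hp := hL.2.2.1 2
          (by simp only [List.length_cons]; have := List.length_pos_iff.mpr hu; omega)
        simp at hp
      subst hu
      rw [mem_tails]; left; rfl
    · have hu : u ≠ [] := by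
        intro hu; subst hu
        have hlast := liftSeq_last hL
        simp at hlast
        omega
      obtain ⟨t1, u', rfl⟩ := List.exists_cons_of_ne_nil hu
      -- basic length facts
      have hlenL : (v::p::t0::t1::u').length = u'.length + 4 := by simp
      -- adjacent distinct facts
      have hne1 := liftSeq_adj_ne hL 1 (by simp only [List.length_cons]; omega)
      have hne2 := liftSeq_adj_ne hL 2 (by simp only [List.length_cons]; omega)
      simp at hne1 hne2
      -- 3-window at 1 : ¬B v p t0
      have hw1 := hL.2.2.2.2.1 1 (by omega) (by simp only [List.length_cons]; omega)
      simp only [show (1:ℕ)-1 = 0 from rfl, show (1:ℕ)+1 = 2 from rfl] at hw1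
      simp at hw1
      -- t0 < p
      have ht0p : t0 < p := by
        simp only [BetweenN] at hw1
        omega
      -- 3-window at 2 : ¬B p t0 t1
      have hw2 := hL.2.2.2.2.1 2 (by omega) (by simp only [List.length_cons]; omega)
      simp at hw2
      have ht01 : t0 < t1 := by
        simp only [BetweenN] at hw2
        omega
      -- t1 > p via descent
      have ht1p : p < t1 := by
        by_contra hcon
        exact liftSeq_descent hL 1 (by simp only [List.length_cons]; omega)
          (by simpa using ht0) (by simpa using ht01) (by simp; omega)
      -- 4-window at 2 : ¬B v p t1 ∨ ¬B v t0 t1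
      have hw4 := hL.2.2.2.2.2 2 (by omega) (by simp only [List.length_cons]; omega)
      simp at hw4
      have ht0v : t0 < v := by
        rcases hw4 with hw | hw <;> (simp only [BetweenN] at hw; omega)
      -- t1 ≤ d
      have ht1d : t1 ≤ d := by
        have := hL.2.2.2.1 3 (by simp only [List.length_cons]; omega)
        simpa using this
      -- u' ≠ []
      have hu' : u' ≠ [] := by
        intro hu'; subst hu'
        have hlast := liftSeq_last hL
        simp at hlast
        omega
      -- recurse
      have hrec : u' ∈ tails d t0 t1 := by
        apply ih u' t0 t1 (by simp only [List.length_cons] at hlen ⊢; omega) hu' ht0 ht01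
        -- LiftSeq d (t0 :: t1 :: u') : peel two
        have h1 := ((liftSeq_cons_iff (t := p::t0::t1::u') (by simp)).mp hL).1
        exact ((liftSeq_cons_iff (t := t0::t1::u') (by simp)).mp h1).1
      rw [mem_tails]
      right
      exact ⟨t0, t1, u', ht0, ht0v, ht1p, ht1d, hrec, rfl⟩

lemma zz_sum_Ioc (d pb v : ℕ) (hv : 1 ≤ v) :
    ∑ p ∈ Finset.Ioc pb d, ((v - 1) + (d - p)).choose (v - 1)
      = ((v - 1) + (d - pb)).choose v := by
  have hIoc : Finset.Ioc pb d = Finset.Ico (pb + 1) (d + 1) := by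
    ext x; simp [Nat.lt_succ_iff, Nat.succ_le_iff]
  rw [hIoc, Finset.sum_Ico_eq_sum_range]
  have h1 : d + 1 - (pb + 1) = d - pb := by omega
  rw [h1]
  have h2 : ∀ k ∈ Finset.range (d - pb),
      ((v - 1) + (d - (pb + 1 + k))).choose (v - 1)
      = ((v - 1) + ((d - pb) - 1 - k)).choose (v - 1) := by
    intro k hk
    congr 2
    omega
  rw [Finset.sum_congr rfl h2, zz_inner_sum]
  congr 1
  omega

def allSeqs (d s : ℕ) : Finset (List ℕ) :=
  if s = 0 then {[0]} else
    ((tails d s s) ∪ (Finset.Ioc s d).biUnion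
      (fun p => (tails d s p).image (fun t => p :: t))).image (fun t => s :: t)

lemma mem_allSeqs {d s : ℕ} (hsd : s ≤ d) {l : List ℕ} :
    l ∈ allSeqs d s ↔ LiftSeq d l ∧ l.headI = s := by
  unfold allSeqs
  rcases Nat.eq_zero_or_pos s with rfl | hs
  · rw [if_pos rfl]
    simp only [Finset.mem_singleton]
    constructor
    · rintro rfl; exact ⟨liftSeq_single, rfl⟩
    · rintro ⟨hL, hh⟩
      obtain ⟨h0, t, rfl⟩ := List.exists_cons_of_ne_nil hL.1
      simp only [List.headI] at hh
      subst hh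
      cases t with
      | nil => rfl
      | cons a u =>
        have := hL.2.2.1 0 (by simp only [List.length_cons]; omega)
        simp at this
  · rw [if_neg (by omega)]
    constructor
    · -- membership → LiftSeq
      intro hl
      simp only [Finset.mem_image, Finset.mem_union, Finset.mem_biUnion, Finset.mem_Ioc] at hl
      obtain ⟨t, ht, rfl⟩ := hl
      refine ⟨?_, rfl⟩
      rcases ht with ht | ⟨p, ⟨hp1, hp2⟩, ht⟩
      · -- shape A
        obtain ⟨hLt, hne, h0, h1, h2⟩ := tails_sound d s s t ht hs le_rfl hsd
        rw [liftSeq_cons_iff hne]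
        refine ⟨hLt, hs, hsd, ?_, ?_⟩
        · intro hlen
          have ha := h1 (by omega)
          simp only [BetweenN]
          omega
        · intro hlen
          right
          have ha := h1 (by omega)
          have hb := h2 (by omega)
          simp only [BetweenN]
          omega
      · -- shape B
        obtain ⟨u, hu, rfl⟩ := ht
        obtain ⟨hLu, hneu, hu0, hu1, hu2⟩ := tails_sound d s p u hu hs (by omega) hp2
        have hLpu : LiftSeq d (p :: u) := by
          rw [liftSeq_cons_iff hneu]
          refine ⟨hLu, by omega, hp2, ?_, ?_⟩
          · intro hlen
            have ha := hu1 (by omega)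
            simp only [BetweenN]
            omega
          · intro hlen
            right
            have ha := hu1 (by omega)
            have hb := hu2 (by omega)
            simp only [BetweenN]
            omega
        rw [liftSeq_cons_iff (List.cons_ne_nil _ _)]
        refine ⟨hLpu, hs, hsd, ?_, ?_⟩
        · intro _
          simp only [List.getD_cons_zero, List.getD_cons_succ, BetweenN]
          omega
        · intro hlen
          right
          have ha := hu1 (by simp only [List.length_cons] at hlen; omega)
          simp only [List.getD_cons_zero, List.getD_cons_succ, BetweenN]
          omega
    · -- LiftSeq → membership
      rintro ⟨hL, hh⟩
      obtain ⟨h0, t, rfl⟩ := List.exists_cons_of_ne_nil hL.1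
      simp only [List.headI] at hh
      subst h0
      simp only [Finset.mem_image, Finset.mem_union, Finset.mem_biUnion, Finset.mem_Ioc]
      refine ⟨t, ?_, rfl⟩
      have ht : t ≠ [] := by
        intro h; subst h
        have := liftSeq_last hL
        simp at this
        omega
      obtain ⟨t0, u, rfl⟩ := List.exists_cons_of_ne_nil ht
      rcases Nat.eq_zero_or_pos t0 with rfl | ht0
      · -- t = [0]
        have hu : u = [] := by
          by_contra hu
          have hp := hL.2.2.1 1
            (by simp only [List.length_cons]; have := List.length_pos_iff.mpr hu; omega)
          simp at hp
        subst hu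
        left
        rw [mem_tails]; left; rfl
      · have hu : u ≠ [] := by
          intro h; subst h
          have := liftSeq_last hL
          simp at this
          omega
        obtain ⟨t1, u', rfl⟩ := List.exists_cons_of_ne_nil hu
        have hne0 := liftSeq_adj_ne hL 0 (by simp only [List.length_cons]; omega)
        simp at hne0
        have hw1 := hL.2.2.2.2.1 1 (by omega) (by simp only [List.length_cons]; omega)
        simp at hw1
        rcases Nat.lt_trichotomy t0 s with hts | hts | hts
        · -- shape A
          have hne1 := liftSeq_adj_ne hL 1 (by simp only [List.length_cons]; omega)
          simp at hne1
          have ht01 : t0 < t1 := by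
            simp only [BetweenN] at hw1
            omega
          have ht1s : s < t1 := by
            by_contra hcon
            exact liftSeq_descent hL 0 (by simp only [List.length_cons]; omega)
              (by simpa using ht0) (by simpa using ht01) (by simp; omega)
          have ht1d : t1 ≤ d := by
            have := hL.2.2.2.1 2 (by simp only [List.length_cons]; omega)
            simpa using this
          have hu' : u' ≠ [] := by
            intro h; subst h
            have := liftSeq_last hL
            simp at this
            omega
          have hrec : u' ∈ tails d t0 t1 := by
            apply tails_complete d u'.length u' t0 t1 le_rfl hu' ht0 ht01
            exact ((liftSeq_cons_iff (t := t0::t1::u') (by simp)).mp hL).1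
          left
          rw [mem_tails]
          right
          exact ⟨t0, t1, u', ht0, hts, ht1s, ht1d, hrec, rfl⟩
        · exact absurd hts.symm hne0
        · -- shape B
          have ht0d : t0 ≤ d := by
            have := hL.2.2.2.1 1 (by simp only [List.length_cons]; omega)
            simpa using this
          have hrec : t1 :: u' ∈ tails d s t0 :=
            tails_complete d (t1::u').length (t1::u') s t0 le_rfl (by simp) hs hts hL
          right
          exact ⟨t0, ⟨hts, ht0d⟩, t1 :: u', hrec, rfl⟩

lemma card_allSeqs {d s : ℕ} (hsd : s ≤ d) : (allSeqs d s).card = d.choose s := by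
  unfold allSeqs
  rcases Nat.eq_zero_or_pos s with rfl | hs
  · simp
  · rw [if_neg (by omega)]
    rw [Finset.card_image_of_injective _ (fun a b h => by simpa using h)]
    rw [Finset.card_union_of_disjoint, Finset.card_biUnion]
    · have hA : (tails d s s).card = (d - 1).choose (s - 1) := by
        rw [card_tails]
        congr 1
        omega
      have hB : ∀ p ∈ Finset.Ioc s d,
          ((tails d s p).image (fun t => p :: t)).card
          = ((s - 1) + (d - p)).choose (s - 1) := by
        intro p hp
        rw [Finset.card_image_of_injective _ (fun a b h => by simpa using h)]
        rw [card_tails]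
      rw [hA, Finset.sum_congr rfl hB, zz_sum_Ioc d s s hs]
      have he : (s - 1) + (d - s) = d - 1 := by omega
      rw [he]
      have hp := Nat.choose_succ_succ (d - 1) (s - 1)
      rw [show (d-1).succ = d from by omega, show (s-1).succ = s from by omega] at hp
      omega
    · -- biUnion pairwise disjoint
      intro p hp q hq hpq
      simp only [Finset.disjoint_left, Finset.mem_image]
      rintro x ⟨t, _, rfl⟩ ⟨t', _, h⟩
      simp only [List.cons.injEq] at h
      exact hpq h.1.symm
    · -- union disjoint
      simp only [Finset.disjoint_left, Finset.mem_biUnion, Finset.mem_image, Finset.mem_Ioc]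
      rintro x hx ⟨p, ⟨hp1, hp2⟩, t, ht, rfl⟩
      rw [mem_tails] at hx
      rcases hx with hx | ⟨v, p', t', hv1, hv2, hv3, _, _, hx⟩
      · injection hx with h1 h2; omega
      · injection hx with h1 h2; omega

theorem stmt_7 (d s : ℕ) (hsd : s ≤ d) :
    {l : List ℕ | LiftSeq d l ∧ l.headI = s}.ncard = d.choose s := by
  have hset : {l : List ℕ | LiftSeq d l ∧ l.headI = s} = ↑(allSeqs d s) := by
    ext l
    simp only [Set.mem_setOf_eq, Finset.coe_sort_coe, Finset.mem_coe]
    exact (mem_allSeqs hsd).symm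
  rw [hset, Set.ncard_coe_finset, card_allSeqs hsd]
end

section
/- Let x₁,...,xₙ be a zigzag sequence of integers (for 2 ≤ i ≤ n-1, x_i is not between x_{i-1},x_{i+1}; for 3 ≤ i ≤ n-1, at least one of x_{i-1},x_i is not between x_{i-2},x_{i+1}), with x₁ = xₙ = 0 and x_i ≥ 0 for all i. If n = 2m+1 is odd, then x_i = 0 for every odd index i with 1 ≤ i ≤ n. -/
private lemma zig_base (b c d : ℕ) (h1 : ¬ BetweenN 0 b c) (h2 : ¬ BetweenN b c d)
    (h3 : ¬ BetweenN 0 b d ∨ ¬ BetweenN 0 c d) (hc : c ≠ 0) :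
    0 < c ∧ c ≤ d ∧ d ≤ b := by
  unfold BetweenN at *; omega

private lemma zig_step (p a b c d : ℕ) (ha : 0 < a) (hab : a ≤ b) (hbp : b ≤ p)
    (h2 : ¬ BetweenN a b c) (h3 : ¬ BetweenN b c d)
    (h4 : ¬ BetweenN p a c ∨ ¬ BetweenN p b c)
    (h5 : ¬ BetweenN a b d ∨ ¬ BetweenN a c d) :
    0 < c ∧ c ≤ d ∧ d ≤ b := by
  unfold BetweenN at *; omega

private lemma zig_fin (p a b c : ℕ) (ha : 0 < a) (hab : a ≤ b) (hbp : b ≤ p)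
    (h2 : ¬ BetweenN a b c)
    (h4 : ¬ BetweenN p a c ∨ ¬ BetweenN p b c) : 0 < c := by
  unfold BetweenN at *; omega

theorem stmt_8 (n m : ℕ) (x : ℕ → ℕ) (hn : n = 2 * m + 1)
    (hzz1 : ∀ i, 2 ≤ i → i ≤ n - 1 →
      ¬ BetweenN (x (i - 1)) (x i) (x (i + 1)))
    (hzz2 : ∀ i, 3 ≤ i → i ≤ n - 1 →
      (¬ BetweenN (x (i - 2)) (x (i - 1)) (x (i + 1)) ∨
       ¬ BetweenN (x (i - 2)) (x i) (x (i + 1))))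
    (h1 : x 1 = 0) (hlast : x n = 0) :
    ∀ i, 1 ≤ i → i ≤ n → Odd i → x i = 0 := by
  classical
  have H1 : ∀ j, 1 ≤ j → j + 2 ≤ n → ¬ BetweenN (x j) (x (j+1)) (x (j+2)) := by
    intro j hj hjn
    exact hzz1 (j+1) (by omega) (by omega)
  have H2 : ∀ j, 1 ≤ j → j + 3 ≤ n →
      (¬ BetweenN (x j) (x (j+1)) (x (j+3)) ∨ ¬ BetweenN (x j) (x (j+2)) (x (j+3))) := by
    intro j hj hjn
    exact hzz2 (j+2) (by omega) (by omega)
  intro i hi1 hin hodd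
  by_contra hne
  have hQ : ∃ k, 2*k+1 ≤ n ∧ x (2*k+1) ≠ 0 := by
    obtain ⟨k, hk⟩ := hodd
    refine ⟨k, by omega, ?_⟩
    rw [show 2*k+1 = i from by omega]
    exact hne
  have hspec := Nat.find_spec hQ
  have hk0pos : 0 < Nat.find hQ := by
    rcases Nat.eq_zero_or_pos (Nat.find hQ) with h0 | h
    · exfalso
      rw [h0] at hspec
      exact hspec.2 h1
    · exact h
  obtain ⟨K, hK⟩ : ∃ K, Nat.find hQ = K + 1 := ⟨Nat.find hQ - 1, by omega⟩
  have hspec1 : 2*(K+1)+1 ≤ n := by rw [← hK]; exact hspec.1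
  have hcur : x (2*K+3) ≠ 0 := by
    have := hspec.2
    rw [hK] at this
    exact this
  have hprev : x (2*K+1) = 0 := by
    by_contra hne'
    exact Nat.find_min hQ (show K < Nat.find hQ from by omega) ⟨by omega, hne'⟩
  have hne_n : 2*K+3 ≠ n := fun h => hcur (h ▸ hlast)
  have hb2 : 2*K+5 ≤ n := by omega
  have chain : ∀ t, 2*K+2*t+5 ≤ n →
      0 < x (2*K+2*t+3) ∧ x (2*K+2*t+3) ≤ x (2*K+2*t+4) ∧
        x (2*K+2*t+4) ≤ x (2*K+2*t+2) := by
    intro t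
    induction t with
    | zero =>
      intro ht
      have e1 := H1 (2*K+1) (by omega) (by omega)
      rw [hprev] at e1
      have e2 := H1 (2*K+2) (by omega) (by omega)
      have e3 := H2 (2*K+1) (by omega) (by omega)
      rw [hprev] at e3
      exact zig_base (x (2*K+2)) (x (2*K+3)) (x (2*K+4)) e1 e2 e3 hcur
    | succ t ih =>
      intro ht
      have e : 2*(t+1) = 2*t+2 := by ring
      rw [e] at ht ⊢
      obtain ⟨ha, hab, hbp⟩ := ih (by omega)
      have e2 := H1 (2*K+2*t+3) (by omega) (by omega)
      have e3 := H1 (2*K+2*t+4) (by omega) (by omega)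
      have e4 := H2 (2*K+2*t+2) (by omega) (by omega)
      have e5 := H2 (2*K+2*t+3) (by omega) (by omega)
      exact zig_step (x (2*K+2*t+2)) (x (2*K+2*t+3)) (x (2*K+2*t+4)) (x (2*K+2*t+5))
        (x (2*K+2*t+6)) ha hab hbp e2 e3 e4 e5
  obtain ⟨t, ht⟩ : ∃ t, n = 2*K+2*t+5 := ⟨(n - (2*K+5))/2, by omega⟩
  obtain ⟨ha, hab, hbp⟩ := chain t (by omega)
  have e2 := H1 (2*K+2*t+3) (by omega) (by omega)
  have e4 := H2 (2*K+2*t+2) (by omega) (by omega)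
  have hpos : 0 < x (2*K+2*t+5) :=
    zig_fin (x (2*K+2*t+2)) (x (2*K+2*t+3)) (x (2*K+2*t+4)) (x (2*K+2*t+5))
      ha hab hbp e2 e4
  rw [← ht] at hpos
  omega
end

section
/- Let x₁,...,xₙ (n ≥ 1) be a zigzag sequence of integers (conditions: for 2 ≤ i ≤ n-1, x_i is not between x_{i-1},x_{i+1}; for 3 ≤ i ≤ n-1, at least one of x_{i-1},x_i is not between x_{i-2},x_{i+1}). If x_j = x_{j+1} for some 1 ≤ j ≤ n-1, then x_j = x_{j+1} = ⋯ = xₙ. -/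
theorem stmt_9 (n : ℕ) (x : ℕ → ℤ)
    (hzz1 : ∀ i, 2 ≤ i → i ≤ n - 1 →
      ¬ Between (x (i - 1)) (x i) (x (i + 1)))
    (hzz2 : ∀ i, 3 ≤ i → i ≤ n - 1 →
      (¬ Between (x (i - 2)) (x (i - 1)) (x (i + 1)) ∨
       ¬ Between (x (i - 2)) (x i) (x (i + 1))))
    (j : ℕ) (hj1 : 1 ≤ j) (hjn : j + 1 ≤ n) (heq : x j = x (j + 1)) :
    ∀ k, j ≤ k → k ≤ n → x k = x j := by
  have step : ∀ k, 1 ≤ k → k + 2 ≤ n → x k = x (k + 1) → x (k + 1) = x (k + 2) := by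
    intro k hk hkn he
    have h1 := hzz1 (k + 1) (by omega) (by omega)
    have hs : k + 1 - 1 = k := by omega
    rw [hs, show k + 1 + 1 = k + 2 from rfl] at h1
    unfold Between at h1
    push_neg at h1
    omega
  have key : ∀ k, j ≤ k → k + 1 ≤ n → x k = x (k + 1) := by
    intro k hk
    induction k, hk using Nat.le_induction with
    | base => intro _; exact heq
    | succ k hk ih =>
      intro hkn
      exact step k (by omega) (by omega) (ih (by omega))
  intro k hk
  induction k, hk using Nat.le_induction with
  | base => intro _; rfl
  | succ k hk ih =>
    intro hkn
    rw [← key k hk (by omega)]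
    exact ih (by omega)
end

section
/- Let x₁,...,xₙ be a zigzag sequence of integers (as above). If |x_{j-1} - x_j| < |x_j - x_{j+1}| for some 3 ≤ j ≤ n-1, then |x_{j-2} - x_{j-1}| < |x_{j-1} - x_j|. -/
theorem stmt_10 (n : ℕ) (x : ℕ → ℤ)
    (hzz1 : ∀ i, 2 ≤ i → i ≤ n - 1 →
      ¬ Between (x (i - 1)) (x i) (x (i + 1)))
    (hzz2 : ∀ i, 3 ≤ i → i ≤ n - 1 →
      (¬ Between (x (i - 2)) (x (i - 1)) (x (i + 1)) ∨
       ¬ Between (x (i - 2)) (x i) (x (i + 1))))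
    (j : ℕ) (hj3 : 3 ≤ j) (hjn : j ≤ n - 1)
    (hlt : |x (j - 1) - x j| < |x j - x (j + 1)|) :
    |x (j - 2) - x (j - 1)| < |x (j - 1) - x j| := by
  have e1 : j - 1 - 1 = j - 2 := by omega
  have e2 : j - 1 + 1 = j := by omega
  have h1 := hzz1 j (by omega) hjn
  have h2 := hzz1 (j - 1) (by omega) (by omega)
  have h3 := hzz2 j hj3 hjn
  rw [e1, e2] at h2
  simp only [Between] at h1 h2 h3
  rcases abs_cases (x (j - 1) - x j) with ⟨ha, _⟩ | ⟨ha, _⟩ <;>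
  rcases abs_cases (x j - x (j + 1)) with ⟨hb, _⟩ | ⟨hb, _⟩ <;>
  rcases abs_cases (x (j - 2) - x (j - 1)) with ⟨hc, _⟩ | ⟨hc, _⟩ <;>
  rw [ha, hb] at hlt <;> rw [hc, ha] <;> omega
end

section
/- Let K be a field, d ≥ 0, and let D be a (d+1)-dimensional commutative K-algebra with a basis of orthogonal idempotents e₀,...,e_d summing to 1, and let a = Σ_{i=0}^d θ_i e_i where θ₀,...,θ_d are mutually distinct elements of K. Then for any 0 ≤ n ≤ d and any (n+1)-element subset S ⊆ {0,...,d}, the set {e_i : i ∉ S} ∪ {1, a, a², ..., aⁿ} is a basis for D. -/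
theorem stmt_12 (K : Type*) [Field K] (d : ℕ) (D : Type*) [CommRing D] [Algebra K D]
    (e : Fin (d + 1) → D) (b : Module.Basis (Fin (d + 1)) K D) (hb : ∀ i, b i = e i)
    (horth : ∀ i j, e i * e j = if i = j then e i else 0)
    (hsum : ∑ i, e i = 1)
    (θ : Fin (d + 1) → K) (hθ : Function.Injective θ)
    (a : D) (ha : a = ∑ i, θ i • e i)
    (n : ℕ) (hn : n ≤ d) (S : Finset (Fin (d + 1))) (hS : S.card = n + 1) :
    LinearIndependent K
      (Sum.elim (fun i : {i : Fin (d + 1) // i ∉ S} => e i)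
                (fun k : Fin (n + 1) => a ^ (k : ℕ))) ∧
    Submodule.span K (Set.range
      (Sum.elim (fun i : {i : Fin (d + 1) // i ∉ S} => e i)
                (fun k : Fin (n + 1) => a ^ (k : ℕ)))) = ⊤ := by
  classical
  -- a ^ k = ∑ i, θ i ^ k • e i
  have hpow : ∀ k : ℕ, a ^ k = ∑ i, θ i ^ k • e i := by
    intro k
    induction k with
    | zero => simp [← hsum]
    | succ k ih =>
      rw [pow_succ, ih, ha, Finset.sum_mul_sum]
      rw [Finset.sum_comm]
      refine Finset.sum_congr rfl fun i _ => ?_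
      rw [Finset.sum_eq_single i]
      · rw [smul_mul_smul_comm, horth, if_pos rfl, pow_succ, mul_smul, smul_comm]
      · intro j _ hj
        rw [smul_mul_smul_comm, horth, if_neg hj, smul_zero]
      · simp
  -- e j * a ^ k = θ j ^ k • e j
  have hea : ∀ (j : Fin (d + 1)) (k : ℕ), e j * a ^ k = θ j ^ k • e j := by
    intro j k
    rw [hpow, Finset.mul_sum, Finset.sum_eq_single j]
    · rw [mul_smul_comm, horth, if_pos rfl]
    · intro i _ hi
      rw [mul_smul_comm, horth, if_neg (Ne.symm hi), smul_zero]
    · simp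
  have hejne : ∀ j : Fin (d + 1), e j ≠ 0 := by
    intro j
    rw [← hb]
    exact b.ne_zero j
  -- linear independence
  have hli : LinearIndependent K
      (Sum.elim (fun i : {i : Fin (d + 1) // i ∉ S} => e i)
                (fun k : Fin (n + 1) => a ^ (k : ℕ))) := by
    rw [Fintype.linearIndependent_iff]
    intro g hg
    rw [Fintype.sum_sum_type] at hg
    simp only [Sum.elim_inl, Sum.elim_inr] at hg
    -- coefficients of the polynomial part vanish
    have hpoly : ∀ k : Fin (n + 1), g (Sum.inr k) = 0 := by
      set p : Polynomial K := ∑ k : Fin (n + 1), Polynomial.C (g (Sum.inr k)) * Polynomial.X ^ (k : ℕ) with hp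
      have heval : ∀ j ∈ S, p.eval (θ j) = 0 := by
        intro j hj
        have h1 : e j * (∑ i : {i // i ∉ S}, g (Sum.inl i) • e i.1
            + ∑ k : Fin (n + 1), g (Sum.inr k) • a ^ (k : ℕ)) = 0 := by
          rw [hg, mul_zero]
        rw [mul_add, Finset.mul_sum, Finset.mul_sum] at h1
        have h2 : ∀ i : {i : Fin (d + 1) // i ∉ S}, e j * (g (Sum.inl i) • e i.1) = 0 := by
          intro i
          rw [mul_smul_comm, horth, if_neg, smul_zero]
          rintro rfl; exact i.2 hj
        rw [Finset.sum_congr rfl (fun i _ => h2 i), Finset.sum_const_zero, zero_add] at h1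
        have h3 : (∑ k : Fin (n + 1), g (Sum.inr k) * θ j ^ (k : ℕ)) • e j = 0 := by
          rw [Finset.sum_smul, ← h1]
          refine Finset.sum_congr rfl fun k _ => ?_
          rw [mul_smul_comm, hea, mul_smul, smul_comm]
        have h4 : (∑ k : Fin (n + 1), g (Sum.inr k) * θ j ^ (k : ℕ)) = 0 := by
          by_contra hc
          exact hejne j (by simpa [smul_smul, hc] using congrArg (fun x => (∑ k : Fin (n + 1), g (Sum.inr k) * θ j ^ (k : ℕ))⁻¹ • x) h3)
        simpa [hp, Polynomial.eval_finset_sum] using h4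
      have hdeg : p.natDegree < S.card := by
        rw [hS]
        refine lt_of_le_of_lt (Polynomial.natDegree_sum_le _ _) ?_
        rw [Finset.fold_max_lt]
        refine ⟨Nat.succ_pos n, fun k _ => ?_⟩
        exact lt_of_le_of_lt (Polynomial.natDegree_C_mul_X_pow_le _ _) k.2
      have hp0 : p = 0 := Polynomial.eq_zero_of_natDegree_lt_card_of_eval_eq_zero' p (S.image θ)
        (by
          intro x hx
          obtain ⟨j, hj, rfl⟩ := Finset.mem_image.mp hx
          exact heval j hj)
        (by rwa [Finset.card_image_of_injective _ hθ])
      intro k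
      have := congrArg (fun q => Polynomial.coeff q (k : ℕ)) hp0
      simp only [hp, Polynomial.finset_sum_coeff, Polynomial.coeff_C_mul,
        Polynomial.coeff_X_pow, Polynomial.coeff_zero] at this
      rw [Finset.sum_eq_single k] at this
      · simpa using this
      · intro l _ hl
        rw [if_neg, mul_zero]
        exact fun h => hl (Fin.ext (by omega))
      · simp
    -- now the e-part
    have hg2 : ∑ i : {i : Fin (d + 1) // i ∉ S}, g (Sum.inl i) • e i.1 = 0 := by
      have : ∑ k : Fin (n + 1), g (Sum.inr k) • a ^ (k : ℕ) = 0 := by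
        refine Finset.sum_eq_zero fun k _ => ?_
        rw [hpoly k, zero_smul]
      rw [this, add_zero] at hg
      exact hg
    have hli' : LinearIndependent K (fun i : {i : Fin (d + 1) // i ∉ S} => e i.1) := by
      have := b.linearIndependent.comp (fun i : {i : Fin (d + 1) // i ∉ S} => i.1)
        Subtype.val_injective
      have heq : (fun i : {i : Fin (d + 1) // i ∉ S} => e i.1) = (⇑b ∘ fun i => i.1) := by
        funext i; simp [hb]
      rw [heq]
      exact this
    have hzero := Fintype.linearIndependent_iff.mp hli' (fun i => g (Sum.inl i)) hg2
    intro x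
    cases x with
    | inl i => exact hzero i
    | inr k => exact hpoly k
  refine ⟨hli, ?_⟩
  -- span = ⊤ by cardinality
  have hfd : FiniteDimensional K D := b.finiteDimensional_of_finite
  refine hli.span_eq_top_of_card_eq_finrank' ?_
  rw [Fintype.card_sum, Fintype.card_fin, Fintype.card_subtype_compl,
    Fintype.card_fin, Fintype.card_coe, hS, Module.finrank_eq_card_basis b, Fintype.card_fin]
  omega
end

section
/- Let K be a field, d ≥ 0, let D be a commutative K-algebra with orthogonal idempotents e₀,...,e_d summing to 1 and a = Σ θ_i e_i with θ_i distinct. Fix integers 0 ≤ s,t ≤ d. Then the following two sets together form a basis for D: {a^k : 0 ≤ k ≤ d, k < |s-t|} and {e_i : 0 ≤ i ≤ d, i is not between s,t}, where r is between the ordered pair a,b means a ≥ r > b or a ≤ r < b. -/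
theorem stmt_13 (K : Type*) [Field K] (d : ℕ) (D : Type*) [CommRing D] [Algebra K D]
    (e : Fin (d + 1) → D) (b : Module.Basis (Fin (d + 1)) K D) (hb : ∀ i, b i = e i)
    (horth : ∀ i j, e i * e j = if i = j then e i else 0)
    (hsum : ∑ i, e i = 1)
    (θ : Fin (d + 1) → K) (hθ : Function.Injective θ)
    (a : D) (ha : a = ∑ i, θ i • e i)
    (s t : ℕ) (hs : s ≤ d) (ht : t ≤ d) :
    LinearIndependent K
      (Sum.elim (fun k : {k : Fin (d + 1) // (k : ℕ) < max s t - min s t} => a ^ (k : ℕ))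
                (fun i : {i : Fin (d + 1) // ¬ BetweenN s (i : ℕ) t} => e i)) ∧
    Submodule.span K (Set.range
      (Sum.elim (fun k : {k : Fin (d + 1) // (k : ℕ) < max s t - min s t} => a ^ (k : ℕ))
                (fun i : {i : Fin (d + 1) // ¬ BetweenN s (i : ℕ) t} => e i))) = ⊤ := by
  classical
  set m := max s t - min s t with hm
  have hmd : m ≤ d := by omega
  -- powers of a in terms of the idempotents
  have hak : ∀ k : ℕ, a ^ k = ∑ i, (θ i ^ k) • e i := by
    intro k
    induction k with
    | zero => simpa using hsum.symm
    | succ k ih =>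
      rw [pow_succ, ih, ha, Finset.sum_mul_sum]
      refine Finset.sum_congr rfl fun i _ => ?_
      simp [smul_mul_smul_comm, horth, Finset.sum_ite_eq, pow_succ, smul_smul, mul_comm]
  -- coordinates
  have hcoord : ∀ (x i : Fin (d + 1)), b.coord x (e i) = if i = x then 1 else 0 := by
    intro x i
    rw [← hb]
    simp [Module.Basis.coord_apply, Module.Basis.repr_self, Finsupp.single_apply]
  have hcoordpow : ∀ (x : Fin (d + 1)) (k : ℕ), b.coord x (a ^ k) = θ x ^ k := by
    intro x k
    rw [hak, map_sum]
    simp [hcoord, Finset.sum_ite_eq']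
  -- cardinalities
  have hcard1 : Fintype.card {k : Fin (d + 1) // (k : ℕ) < m} = m := by
    rw [Fintype.card_subtype, Finset.card_filter,
      Fin.sum_univ_eq_sum_range (fun n => if n < m then (1 : ℕ) else 0),
      ← Finset.card_filter]
    have : (Finset.range (d + 1)).filter (fun n => n < m) = Finset.range m := by
      ext n; simp [Finset.mem_filter, Finset.mem_range]; omega
    rw [this, Finset.card_range]
  have hcardB : Fintype.card {i : Fin (d + 1) // BetweenN s (i : ℕ) t} = m := by
    rw [Fintype.card_subtype, Finset.card_filter,
      Fin.sum_univ_eq_sum_range (fun n => if BetweenN s n t then (1 : ℕ) else 0),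
      ← Finset.card_filter]
    rcases le_total s t with hst | hst
    · have : (Finset.range (d + 1)).filter (fun n => BetweenN s n t) = Finset.Ico s t := by
        ext n; simp [Finset.mem_filter, Finset.mem_range, Finset.mem_Ico, BetweenN]; omega
      rw [this, Nat.card_Ico]; omega
    · have : (Finset.range (d + 1)).filter (fun n => BetweenN s n t) = Finset.Ioc t s := by
        ext n; simp [Finset.mem_filter, Finset.mem_range, Finset.mem_Ioc, BetweenN]; omega
      rw [this, Nat.card_Ioc]; omega
  have hcard2 : Fintype.card {i : Fin (d + 1) // ¬ BetweenN s (i : ℕ) t} = d + 1 - m := by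
    rw [Fintype.card_subtype_compl, hcardB, Fintype.card_fin]
  -- linear independence
  have hli : LinearIndependent K
      (Sum.elim (fun k : {k : Fin (d + 1) // (k : ℕ) < m} => a ^ (k : ℕ))
                (fun i : {i : Fin (d + 1) // ¬ BetweenN s (i : ℕ) t} => e i)) := by
    rw [Fintype.linearIndependent_iff]
    intro g hg
    rw [Fintype.sum_sum_type] at hg
    simp only [Sum.elim_inl, Sum.elim_inr] at hg
    set G : ℕ → K := fun n =>
      if h : n < d + 1 then (if h2 : n < m then g (Sum.inl ⟨⟨n, h⟩, h2⟩) else 0) else 0 with hG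
    have hsum1 : ∑ k : {k : Fin (d + 1) // (k : ℕ) < m}, g (Sum.inl k) • a ^ (k : ℕ)
        = ∑ n ∈ Finset.range m, G n • a ^ n := by
      refine Finset.sum_bij' (fun k _ => (k : ℕ))
        (fun n hn => ⟨⟨n, by have := Finset.mem_range.mp hn; omega⟩,
          by simpa using Finset.mem_range.mp hn⟩) ?_ ?_ ?_ ?_ ?_
      · intro k _; simpa using k.2
      · intro n hn; simp
      · intro k _; rfl
      · intro n hn; rfl
      · intro k _
        have h1 : (k : ℕ) < d + 1 := k.1.isLt
        have h2 : (k : ℕ) < m := k.2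
        simp [hG, h1, h2, (by omega : ¬ d < (k : ℕ)), (by omega : (k : ℕ) ≤ d)]
    rw [hsum1] at hg
    set P : Polynomial K := ∑ n ∈ Finset.range m, Polynomial.C (G n) * Polynomial.X ^ n with hP
    have hroot : ∀ x : Fin (d + 1), BetweenN s (x : ℕ) t → P.eval (θ x) = 0 := by
      intro x hx
      have h0 := congrArg (b.coord x) hg
      rw [map_add, map_sum, map_sum, map_zero] at h0
      simp only [map_smul, hcoordpow] at h0
      have hzero : ∀ j : {i : Fin (d + 1) // ¬ BetweenN s (i : ℕ) t},
          g (Sum.inr j) • (b.coord x) (e (j : Fin (d + 1))) = 0 := by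
        intro j
        rw [hcoord, if_neg, smul_zero]
        intro hjx
        exact j.2 (hjx ▸ hx)
      rw [Finset.sum_eq_zero (fun j _ => hzero j), add_zero] at h0
      rw [hP]
      simp only [Polynomial.eval_finset_sum, Polynomial.eval_mul, Polynomial.eval_C,
        Polynomial.eval_pow, Polynomial.eval_X]
      simpa [smul_eq_mul] using h0
    have hPzero : P = 0 := by
      rcases Nat.eq_zero_or_pos m with h0 | hpos
      · simp [hP, h0]
      · refine Polynomial.eq_zero_of_natDegree_lt_card_of_eval_eq_zero P
          (f := fun i : {i : Fin (d + 1) // BetweenN s (i : ℕ) t} => θ (i : Fin (d + 1)))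
          ?_ (fun i => hroot i i.2) ?_
        · intro i j hij
          exact Subtype.ext (hθ hij)
        · rw [hcardB]
          refine lt_of_le_of_lt (Polynomial.natDegree_sum_le_of_forall_le _ _ fun n hn => ?_)
            (show m - 1 < m by omega)
          have hn' : n < m := Finset.mem_range.mp hn
          calc (Polynomial.C (G n) * Polynomial.X ^ n).natDegree
              ≤ n := (Polynomial.natDegree_C_mul_le _ _).trans (by simp)
            _ ≤ m - 1 := by omega
    have hGzero : ∀ n < m, G n = 0 := by
      intro n hn
      have h0 := congrArg (fun q => Polynomial.coeff q n) hPzero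
      simp only [hP, Polynomial.finset_sum_coeff, Polynomial.coeff_C_mul,
        Polynomial.coeff_X_pow, Polynomial.coeff_zero, mul_ite, mul_one, mul_zero] at h0
      rwa [Finset.sum_ite_eq (Finset.range m) n G, if_pos (Finset.mem_range.mpr hn)] at h0
    have hinl : ∀ k : {k : Fin (d + 1) // (k : ℕ) < m}, g (Sum.inl k) = 0 := by
      intro k
      have h1 : (k : ℕ) < d + 1 := k.1.isLt
      have h2 : (k : ℕ) < m := k.2
      have := hGzero (k : ℕ) h2
      simpa [hG, h1, h2, (by omega : ¬ d < (k : ℕ)), (by omega : (k : ℕ) ≤ d)] using this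
    have hg2 : ∑ j : {i : Fin (d + 1) // ¬ BetweenN s (i : ℕ) t},
        g (Sum.inr j) • e (j : Fin (d + 1)) = 0 := by
      rw [Finset.sum_eq_zero (fun n hn => by
        rw [hGzero n (Finset.mem_range.mp hn), zero_smul]), zero_add] at hg
      exact hg
    have hli_e : LinearIndependent K
        (fun j : {i : Fin (d + 1) // ¬ BetweenN s (i : ℕ) t} => e (j : Fin (d + 1))) := by
      have := b.linearIndependent.comp
        (fun j : {i : Fin (d + 1) // ¬ BetweenN s (i : ℕ) t} => (j : Fin (d + 1)))
        (fun x y hxy => Subtype.ext hxy)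
      have h2 : (fun j : {i : Fin (d + 1) // ¬ BetweenN s (i : ℕ) t} => e (j : Fin (d + 1)))
          = ⇑b ∘ fun j : {i : Fin (d + 1) // ¬ BetweenN s (i : ℕ) t} => (j : Fin (d + 1)) :=
        funext fun j => (hb _).symm
      rw [h2]
      exact this
    have hinr := Fintype.linearIndependent_iff.mp hli_e (fun j => g (Sum.inr j)) hg2
    intro x
    cases x with
    | inl k => exact hinl k
    | inr j => exact hinr j
  haveI : FiniteDimensional K D := Module.Finite.of_basis b
  refine ⟨hli, hli.span_eq_top_of_card_eq_finrank' ?_⟩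
  rw [Fintype.card_sum, hcard1, hcard2,
    Module.finrank_eq_card_basis b, Fintype.card_fin]
  omega
end

section
/- Let d ≥ 0 and fix 0 ≤ s,t ≤ d with s ≤ t (case s < t of the weight function). Define, for nonzigzag pairs (i,j) relative to (s,t) with s<t, the weight w(i,j): w = 2i if 0≤i<s and i≤j<t; w = 2(d-t+i+1) if s≤i<t and s≤j<s+t-i; w = 2(d-i+s) if t<j≤i≤d; w = 2j+1 if 0≤j<i≤s; w = 2(d-j+s)+1 if s<j≤t and s+t-j≤i<t; w = 2(d-j+s)+1 if t<j≤d and s≤i<j. Then: (i) if (i,j) is positive and (i,r) is negative, then w(i,j) > w(i,r); (ii) if (i,j) is negative and (r,j) is positive, then w(i,j) > w(r,j). -/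
/-- The pair `(i,j)` is positive relative to `(d,s,t)`, in the case `s < t`. -/
def PositiveLT (d s t i j : ℤ) : Prop :=
  (0 ≤ i ∧ i < s ∧ i ≤ j ∧ j < t)
  ∨ (s ≤ i ∧ i < t ∧ s ≤ j ∧ j < s + t - i)
  ∨ (t < j ∧ j ≤ i ∧ i ≤ d)

/-- The pair `(i,j)` is negative (case `s < t`): neither zigzag nor positive. -/
def NegativeLT (d s t i j : ℤ) : Prop :=
  ¬ Zigzag s t i j ∧ ¬ PositiveLT d s t i j

/-- The weight of a nonzigzag pair `(i,j)`, in the case `s < t`. -/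
noncomputable def weight (d s t i j : ℤ) : ℤ :=
  if 0 ≤ i ∧ i < s ∧ i ≤ j ∧ j < t then 2 * i
  else if s ≤ i ∧ i < t ∧ s ≤ j ∧ j < s + t - i then 2 * (d - t + i + 1)
  else if t < j ∧ j ≤ i ∧ i ≤ d then 2 * (d - i + s)
  else if 0 ≤ j ∧ j < i ∧ i ≤ s then 2 * j + 1
  else if s < j ∧ j ≤ t ∧ s + t - j ≤ i ∧ i < t then 2 * (d - j + s) + 1
  else if t < j ∧ j ≤ d ∧ s ≤ i ∧ i < j then 2 * (d - j + s) + 1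
  else 0


lemma neg_char (d s t i j : ℤ) (hst : s < t) (h1 : 0 ≤ i) (h2 : i ≤ d)
    (h3 : 0 ≤ j) (h4 : j ≤ d) (hn : NegativeLT d s t i j) :
    (0 ≤ j ∧ j < i ∧ i ≤ s) ∨ (s < j ∧ j ≤ t ∧ s + t - j ≤ i ∧ i < t)
      ∨ (t < j ∧ j ≤ d ∧ s ≤ i ∧ i < j) := by
  obtain ⟨hz, hp⟩ := hn
  simp only [Zigzag, Between, PositiveLT, not_and, not_or, not_lt, not_le, ge_iff_le] at hz hp
  omega

lemma w1 (d s t i j : ℤ) (h : 0 ≤ i ∧ i < s ∧ i ≤ j ∧ j < t) :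
    weight d s t i j = 2 * i := by
  unfold weight; rw [if_pos h]

lemma w2 (d s t i j : ℤ) (h : s ≤ i ∧ i < t ∧ s ≤ j ∧ j < s + t - i) :
    weight d s t i j = 2 * (d - t + i + 1) := by
  unfold weight; rw [if_neg (by omega), if_pos h]

lemma w3 (d s t i j : ℤ) (hst : s < t) (h : t < j ∧ j ≤ i ∧ i ≤ d) :
    weight d s t i j = 2 * (d - i + s) := by
  unfold weight; rw [if_neg (by omega), if_neg (by omega), if_pos h]

lemma w4 (d s t i j : ℤ) (hst : s < t) (h : 0 ≤ j ∧ j < i ∧ i ≤ s) :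
    weight d s t i j = 2 * j + 1 := by
  unfold weight
  rw [if_neg (by omega), if_neg (by omega), if_neg (by omega), if_pos h]

lemma w5 (d s t i j : ℤ) (hst : s < t) (h : s < j ∧ j ≤ t ∧ s + t - j ≤ i ∧ i < t) :
    weight d s t i j = 2 * (d - j + s) + 1 := by
  unfold weight
  rw [if_neg (by omega), if_neg (by omega), if_neg (by omega), if_neg (by omega), if_pos h]

lemma w6 (d s t i j : ℤ) (hst : s < t) (h : t < j ∧ j ≤ d ∧ s ≤ i ∧ i < j) :
    weight d s t i j = 2 * (d - j + s) + 1 := by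
  unfold weight
  rw [if_neg (by omega), if_neg (by omega), if_neg (by omega), if_neg (by omega),
    if_neg (by omega), if_pos h]

theorem stmt_15 (d s t : ℤ) (hd : 0 ≤ d) (hs0 : 0 ≤ s) (hst : s < t) (htd : t ≤ d) :
    (∀ i j r, 0 ≤ i → i ≤ d → 0 ≤ j → j ≤ d → 0 ≤ r → r ≤ d →
      PositiveLT d s t i j → NegativeLT d s t i r →
      weight d s t i r < weight d s t i j) ∧
    (∀ i j r, 0 ≤ i → i ≤ d → 0 ≤ j → j ≤ d → 0 ≤ r → r ≤ d →
      NegativeLT d s t i j → PositiveLT d s t r j →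
      weight d s t r j < weight d s t i j) := by
  constructor
  · intro i j r h1 h2 h3 h4 h5 h6 hp hn
    have hN := neg_char d s t i r hst h1 h2 h5 h6 hn
    rcases hN with h | h | h <;>
      [rw [w4 d s t i r hst h]; rw [w5 d s t i r hst h]; rw [w6 d s t i r hst h]] <;>
    rcases hp with g | g | g <;>
      [rw [w1 d s t i j g]; rw [w2 d s t i j g]; rw [w3 d s t i j hst g];
       rw [w1 d s t i j g]; rw [w2 d s t i j g]; rw [w3 d s t i j hst g];
       rw [w1 d s t i j g]; rw [w2 d s t i j g]; rw [w3 d s t i j hst g]] <;>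
    omega
  · intro i j r h1 h2 h3 h4 h5 h6 hn hp
    have hN := neg_char d s t i j hst h1 h2 h3 h4 hn
    rcases hN with h | h | h <;>
      [rw [w4 d s t i j hst h]; rw [w5 d s t i j hst h]; rw [w6 d s t i j hst h]] <;>
    rcases hp with g | g | g <;>
      [rw [w1 d s t r j g]; rw [w2 d s t r j g]; rw [w3 d s t r j hst g];
       rw [w1 d s t r j g]; rw [w2 d s t r j g]; rw [w3 d s t r j hst g];
       rw [w1 d s t r j g]; rw [w2 d s t r j g]; rw [w3 d s t r j hst g]] <;>
    omega
end

section
/- Fix an integer d ≥ 0. Let L denote the set of finite integer sequences x₁,...,xₙ (n ≥ 1) with values in {0,...,d}, satisfying: xₙ = 0; x_i > 0 for 1 ≤ i ≤ n-1; and the zigzag conditions (for 2 ≤ i ≤ n-1, x_i is not between x_{i-1},x_{i+1}; for 3 ≤ i ≤ n-1, at least one of x_{i-1},x_i is not between x_{i-2},x_{i+1}). Then there is a bijection f from L to the power set of {1,...,d} such that for every sequence (x₁,...,xₙ) ∈ L, the image under f has cardinality x₁. -/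
inductive Zg : List ℕ → Prop
  | nil : Zg []
  | one (m : ℕ) : 0 < m → Zg [m]
  | two (p v : ℕ) : 0 < v → v < p → Zg [p, v]
  | cons (p v q : ℕ) (s : List ℕ) : 0 < v → v < p → q < p → v < s.headD q →
      Zg (q :: s) → Zg (p :: v :: q :: s)

def Eset : List ℕ → Finset ℕ
  | [] => ∅
  | [m] => Finset.Icc 1 m
  | [p, v] => insert p ((Finset.Icc 1 v).erase v)
  | p :: v :: q :: s => insert p ((Eset (q :: s)).erase v)

def vOf : List ℕ → ℕ
  | [] => 0
  | [m] => m + 1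
  | _ :: v :: _ => v

lemma Eset_mem_bounds {t : List ℕ} (h : Zg t) {x : ℕ} (hx : x ∈ Eset t) :
    1 ≤ x ∧ x ≤ t.headD 0 := by
  induction h with
  | nil => simp [Eset] at hx
  | one m hm =>
      simp only [Eset, Finset.mem_Icc] at hx
      simpa using hx
  | two p v hv hvp =>
      simp only [Eset, Finset.mem_insert, Finset.mem_erase, Finset.mem_Icc] at hx
      simp only [List.headD_cons]
      omega
  | cons p v q s hv hvp hqp hvs hz ih =>
      simp only [Eset, Finset.mem_insert, Finset.mem_erase] at hx
      simp only [List.headD_cons]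
      rcases hx with rfl | ⟨_, hx⟩
      · omega
      · have := ih hx; simp only [List.headD_cons] at this; omega

lemma Eset_head_mem {a : ℕ} {r : List ℕ} (h : Zg (a :: r)) : a ∈ Eset (a :: r) := by
  cases h with
  | one m hm => simp only [Eset, Finset.mem_Icc]; omega
  | two p v hv hvp => simp [Eset]
  | cons p v q s hv hvp hqp hvs hz => simp [Eset]

lemma Eset_lt_v_mem {t : List ℕ} (h : Zg t) {x : ℕ}
    (h1 : 1 ≤ x) (h2 : x < vOf t) : x ∈ Eset t := by
  induction h with
  | nil => exact absurd h2 (by simp [vOf])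
  | one m hm =>
      have h2' : x < m + 1 := h2
      simp only [Eset, Finset.mem_Icc]; omega
  | two p v hv hvp =>
      have h2' : x < v := h2
      simp only [Eset, Finset.mem_insert, Finset.mem_erase, Finset.mem_Icc]
      omega
  | cons p v q s hv hvp hqp hvs hz ih =>
      have h2' : x < v := h2
      simp only [Eset, Finset.mem_insert, Finset.mem_erase]
      right
      refine ⟨by omega, ?_⟩
      apply ih
      cases s with
      | nil => simp only [List.headD_nil] at hvs; show x < q + 1; omega
      | cons v2 s' => simp only [List.headD_cons] at hvs; show x < v2; omega

lemma Eset_v_not_mem {p v : ℕ} {r : List ℕ} (h : Zg (p :: v :: r)) :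
    v ∉ Eset (p :: v :: r) := by
  have hvp : v < p := by
    cases h with
    | two _ _ hv hvp => exact hvp
    | cons _ _ _ _ hv hvp _ _ _ => exact hvp
  cases r with
  | nil =>
      simp only [Eset, Finset.mem_insert, Finset.mem_erase, Finset.mem_Icc]
      omega
  | cons q s =>
      simp only [Eset, Finset.mem_insert, Finset.mem_erase]
      omega

lemma Eset_v_mem_sub {p v q : ℕ} {s : List ℕ} (h : Zg (p :: v :: q :: s)) :
    v ∈ Eset (q :: s) := by
  cases h with
  | cons _ _ _ _ hv hvp hqp hvs hz =>
      apply Eset_lt_v_mem hz hv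
      cases s with
      | nil => simp only [List.headD_nil] at hvs; show v < q + 1; omega
      | cons v2 s' => simp only [List.headD_cons] at hvs; show v < v2; omega

lemma Eset_card {t : List ℕ} (h : Zg t) : (Eset t).card = t.getLastD 0 := by
  induction h with
  | nil => simp [Eset]
  | one m hm => simp [Eset, Nat.card_Icc, List.getLastD]
  | two p v hv hvp =>
      have hpv : p ∉ (Finset.Icc 1 v).erase v := by
        simp only [Finset.mem_erase, Finset.mem_Icc]; omega
      have hvm : v ∈ Finset.Icc 1 v := by simp only [Finset.mem_Icc]; omega
      simp only [Eset, List.getLastD_cons, List.getLastD_nil]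
      rw [Finset.card_insert_of_notMem hpv, Finset.card_erase_of_mem hvm, Nat.card_Icc]
      omega
  | cons p v q s hv hvp hqp hvs hz ih =>
      have hvm : v ∈ Eset (q :: s) := Eset_v_mem_sub (Zg.cons p v q s hv hvp hqp hvs hz)
      have hpn : p ∉ (Eset (q :: s)).erase v := by
        intro hc
        have := Eset_mem_bounds hz (Finset.mem_of_mem_erase hc)
        simp only [List.headD_cons] at this; omega
      have hcard : 1 ≤ (Eset (q :: s)).card := Finset.card_pos.mpr ⟨v, hvm⟩
      have heq : (p :: v :: q :: s).getLastD 0 = (q :: s).getLastD 0 := by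
        simp only [List.getLastD_cons]
      rw [heq, Eset, Finset.card_insert_of_notMem hpn, Finset.card_erase_of_mem hvm, ih]
      omega

lemma Eset_subset {d : ℕ} {t : List ℕ} (h : Zg t) (hb : ∀ x ∈ t, x ≤ d) :
    Eset t ⊆ Finset.Icc 1 d := by
  intro x hx
  have h1 := Eset_mem_bounds h hx
  cases t with
  | nil => simp [Eset] at hx
  | cons a r =>
      have : a ≤ d := hb a (by simp)
      simp only [List.headD_cons] at h1
      simp only [Finset.mem_Icc]
      omega
lemma Zg_pos_lt {p v : ℕ} {r : List ℕ} (h : Zg (p :: v :: r)) : 0 < v ∧ v < p := by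
  cases h with
  | two _ _ a b => exact ⟨a, b⟩
  | cons _ _ _ _ a b _ _ _ => exact ⟨a, b⟩

lemma Zg_v_lt_q {p v q : ℕ} {s : List ℕ} (h : Zg (p :: v :: q :: s)) : v < q := by
  cases h with
  | cons _ _ _ _ hv hvp hqp hvs hz =>
      cases s with
      | nil => simpa using hvs
      | cons v2 s' =>
          have h2 := (Zg_pos_lt hz).2
          simp only [List.headD_cons] at hvs
          omega

lemma Eset_head_eq {a b : ℕ} {r w : List ℕ} (h1 : Zg (a :: r)) (h2 : Zg (b :: w))
    (he : Eset (a :: r) = Eset (b :: w)) : a = b := by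
  have hm1 := Eset_head_mem h1
  have hm2 := Eset_head_mem h2
  have e1 := (Eset_mem_bounds h2 (he ▸ hm1)).2
  have e2 := (Eset_mem_bounds h1 (he ▸ hm2)).2
  simp only [List.headD_cons] at e1 e2
  omega

lemma Eset_v_eq {p1 v1 p2 v2 : ℕ} {r1 r2 : List ℕ} (h1 : Zg (p1 :: v1 :: r1))
    (h2 : Zg (p2 :: v2 :: r2)) (he : Eset (p1 :: v1 :: r1) = Eset (p2 :: v2 :: r2)) :
    v1 = v2 := by
  by_contra hne
  rcases Nat.lt_or_ge v1 v2 with hlt | hge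
  · have hm : v1 ∈ Eset (p2 :: v2 :: r2) :=
      Eset_lt_v_mem h2 (Zg_pos_lt h1).1 (show v1 < v2 from hlt)
    exact Eset_v_not_mem h1 (he ▸ hm)
  · have hlt2 : v2 < v1 := by omega
    have hm : v2 ∈ Eset (p1 :: v1 :: r1) :=
      Eset_lt_v_mem h1 (Zg_pos_lt h2).1 (show v2 < v1 from hlt2)
    exact Eset_v_not_mem h2 (he ▸ hm)

lemma Eset_two_ne_cons {p1 v1 p2 v2 q : ℕ} {s : List ℕ} (h1 : Zg [p1, v1])
    (h2 : Zg (p2 :: v2 :: q :: s)) : Eset [p1, v1] ≠ Eset (p2 :: v2 :: q :: s) := by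
  intro he
  have hp : p1 = p2 := Eset_head_eq h1 h2 he
  have hv : v1 = v2 := Eset_v_eq h1 h2 he
  subst hp; subst hv
  have hvp := Zg_pos_lt h1
  have hvq := Zg_v_lt_q h2
  have hq : q ∈ Eset (q :: s) := by
    cases h2 with
    | cons _ _ _ _ _ _ _ _ hz => exact Eset_head_mem hz
  have hqm : q ∈ Eset (p1 :: v1 :: q :: s) := by
    simp only [Eset, Finset.mem_insert, Finset.mem_erase]
    exact Or.inr ⟨by omega, hq⟩
  rw [← he] at hqm
  have hqp : q < p1 := by
    cases h2 with
    | cons _ _ _ _ _ _ hqp _ _ => exact hqp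
  simp only [Eset, Finset.mem_insert, Finset.mem_erase, Finset.mem_Icc] at hqm
  omega

lemma Eset_inj {t1 : List ℕ} (h1 : Zg t1) :
    ∀ {t2 : List ℕ}, Zg t2 → Eset t1 = Eset t2 → t1 = t2 := by
  induction h1 with
  | nil =>
      intro t2 h2 he
      cases t2 with
      | nil => rfl
      | cons b w =>
          have := Eset_head_mem h2
          rw [← he] at this
          simp [Eset] at this
  | one m hm =>
      intro t2 h2 he
      cases h2 with
      | nil => have : m ∈ Eset [m] := Eset_head_mem (Zg.one m hm)
               rw [he] at this; simp [Eset] at this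
      | one m2 hm2 => rw [Eset_head_eq (Zg.one m hm) (Zg.one m2 hm2) he]
      | two p v hv hvp =>
          exfalso
          have hp : m = p := Eset_head_eq (Zg.one m hm) (Zg.two p v hv hvp) he
          have : v ∈ Eset [m] := by
            simp only [Eset, Finset.mem_Icc]; omega
          rw [he] at this
          exact Eset_v_not_mem (Zg.two p v hv hvp) this
      | cons p v q s hv hvp hqp hvs hz =>
          exfalso
          have hzc := Zg.cons p v q s hv hvp hqp hvs hz
          have hp : m = p := Eset_head_eq (Zg.one m hm) hzc he
          have : v ∈ Eset [m] := by
            simp only [Eset, Finset.mem_Icc]; omega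
          rw [he] at this
          exact Eset_v_not_mem hzc this
  | two p v hv hvp =>
      intro t2 h2 he
      have hz1 := Zg.two p v hv hvp
      cases h2 with
      | nil => have := Eset_head_mem hz1; rw [he] at this; simp [Eset] at this
      | one m2 hm2 =>
          exfalso
          have hp : m2 = p := Eset_head_eq (Zg.one m2 hm2) hz1 he.symm
          have : v ∈ Eset [m2] := by simp only [Eset, Finset.mem_Icc]; omega
          rw [he.symm] at this
          exact Eset_v_not_mem hz1 this
      | two p2 v2 hv2 hvp2 =>
          rw [Eset_head_eq hz1 (Zg.two p2 v2 hv2 hvp2) he,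
              Eset_v_eq hz1 (Zg.two p2 v2 hv2 hvp2) he]
      | cons p2 v2 q s hv2 hvp2 hqp2 hvs2 hz2 =>
          exact absurd he (Eset_two_ne_cons hz1 (Zg.cons p2 v2 q s hv2 hvp2 hqp2 hvs2 hz2))
  | cons p v q s hv hvp hqp hvs hz ih =>
      intro t2 h2 he
      have hz1 := Zg.cons p v q s hv hvp hqp hvs hz
      cases h2 with
      | nil => have := Eset_head_mem hz1; rw [he] at this; simp [Eset] at this
      | one m2 hm2 =>
          exfalso
          have hp : m2 = p := Eset_head_eq (Zg.one m2 hm2) hz1 he.symm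
          have : v ∈ Eset [m2] := by simp only [Eset, Finset.mem_Icc]; omega
          rw [he.symm] at this
          exact Eset_v_not_mem hz1 this
      | two p2 v2 hv2 hvp2 =>
          exact absurd he.symm (Eset_two_ne_cons (Zg.two p2 v2 hv2 hvp2) hz1)
      | cons p2 v2 q2 s2 hv2 hvp2 hqp2 hvs2 hz2 =>
          have hz2c := Zg.cons p2 v2 q2 s2 hv2 hvp2 hqp2 hvs2 hz2
          have hp : p = p2 := Eset_head_eq hz1 hz2c he
          have hvv : v = v2 := Eset_v_eq hz1 hz2c he
          subst hp; subst hvv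
          have hpn1 : p ∉ (Eset (q :: s)).erase v := by
            intro hc
            have := Eset_mem_bounds hz (Finset.mem_of_mem_erase hc)
            simp only [List.headD_cons] at this; omega
          have hpn2 : p ∉ (Eset (q2 :: s2)).erase v := by
            intro hc
            have := Eset_mem_bounds hz2 (Finset.mem_of_mem_erase hc)
            simp only [List.headD_cons] at this; omega
          have he' : (Eset (q :: s)).erase v = (Eset (q2 :: s2)).erase v := by
            have := congrArg (fun X => X.erase p) he
            simpa [Eset, Finset.erase_insert hpn1, Finset.erase_insert hpn2] using this
          have hv1m : v ∈ Eset (q :: s) := Eset_v_mem_sub hz1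
          have hv2m : v ∈ Eset (q2 :: s2) := Eset_v_mem_sub hz2c
          have he'' : Eset (q :: s) = Eset (q2 :: s2) := by
            rw [← Finset.insert_erase hv1m, ← Finset.insert_erase hv2m, he']
          have := ih hz2 he''
          rw [List.cons.injEq] at this
          rw [this.1, this.2]
lemma Eset_surj (d : ℕ) (S : Finset ℕ) (hS : S ⊆ Finset.Icc 1 d) :
    ∃ t, Zg t ∧ (∀ x ∈ t, x ≤ d) ∧ Eset t = S := by
  suffices h : ∀ n (S : Finset ℕ), (∑ x ∈ S, x) = n → S ⊆ Finset.Icc 1 d →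
      ∃ t, Zg t ∧ (∀ x ∈ t, x ≤ d) ∧ Eset t = S from h _ S rfl hS
  clear hS S
  intro n
  induction n using Nat.strong_induction_on with
  | _ n ih =>
  intro S hsum hS
  by_cases hin : S = Finset.Icc 1 S.card
  · rcases Nat.eq_zero_or_pos S.card with h0 | h0
    · have hSe : S = ∅ := Finset.card_eq_zero.mp h0
      exact ⟨[], Zg.nil, by simp, by simp [Eset, hSe]⟩
    · have hcm : S.card ∈ S := by
        have h1 : S.card ∈ Finset.Icc 1 S.card := by simp only [Finset.mem_Icc]; omega
        rw [← hin] at h1; exact h1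
      have hcd : S.card ≤ d := by
        have := hS hcm; simp only [Finset.mem_Icc] at this; omega
      exact ⟨[S.card], Zg.one _ h0, by simpa using hcd, by rw [show Eset [S.card] = Finset.Icc 1 S.card from rfl]; exact hin.symm⟩
  · have hne : S.Nonempty := by
      rcases S.eq_empty_or_nonempty with rfl | h
      · exact absurd (by simp) hin
      · exact h
    set p := S.max' hne with hp_def
    have hpS : p ∈ S := S.max'_mem hne
    have hple : ∀ x ∈ S, x ≤ p := fun x hx => S.le_max' x hx
    have hp1 : 1 ≤ p ∧ p ≤ d := by
      have := hS hpS; simp only [Finset.mem_Icc] at this; exact this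
    have hT : (Finset.Icc 1 p \ S).Nonempty := by
      apply Finset.sdiff_nonempty.mpr
      intro hsub
      apply hin
      have hSeq : S = Finset.Icc 1 p := by
        apply Finset.Subset.antisymm _ hsub
        intro x hx
        have hx1 := hS hx
        simp only [Finset.mem_Icc] at hx1 ⊢
        exact ⟨hx1.1, hple x hx⟩
      have hcard : S.card = p := by rw [hSeq, Nat.card_Icc]; omega
      rw [hcard, hSeq]
    set v := (Finset.Icc 1 p \ S).min' hT with hv_def
    have hvT : v ∈ Finset.Icc 1 p \ S := Finset.min'_mem _ hT
    have hv1 : 1 ≤ v ∧ v ≤ p ∧ v ∉ S := by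
      simp only [Finset.mem_sdiff, Finset.mem_Icc] at hvT; tauto
    have hvmin : ∀ x, 1 ≤ x → x < v → x ∈ S := by
      intro x h1 h2
      by_contra hxn
      have : x ∈ Finset.Icc 1 p \ S := by
        simp only [Finset.mem_sdiff, Finset.mem_Icc]
        exact ⟨⟨h1, by omega⟩, hxn⟩
      have := Finset.min'_le _ _ this
      omega
    have hvp : v < p := by
      rcases Nat.lt_or_ge v p with h | h
      · exact h
      · exfalso; have : v = p := by omega
        rw [this] at hv1; exact hv1.2.2 hpS
    set S' := insert v (S.erase p) with hS'_def
    have hvnE : v ∉ S.erase p := fun hc => hv1.2.2 (Finset.mem_of_mem_erase hc)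
    have hsum' : (∑ x ∈ S', x) + p = n + v := by
      rw [hS'_def, Finset.sum_insert hvnE]
      have h2 : (∑ x ∈ S.erase p, x) + p = ∑ x ∈ S, x := Finset.sum_erase_add S _ hpS
      omega
    have hS'sub : S' ⊆ Finset.Icc 1 d := by
      intro x hx
      rcases Finset.mem_insert.mp hx with rfl | hx
      · simp only [Finset.mem_Icc]; omega
      · exact hS (Finset.mem_of_mem_erase hx)
    obtain ⟨t', hz', hb', he'⟩ := ih (∑ x ∈ S', x) (by omega) S' rfl hS'sub
    have hvS' : v ∈ S' := Finset.mem_insert_self _ _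
    have hSrec : S = insert p (S'.erase v) := by
      rw [hS'_def, Finset.erase_insert hvnE, Finset.insert_erase hpS]
    cases t' with
    | nil =>
        exfalso; rw [← he'] at hvS'; simp [Eset] at hvS'
    | cons q s =>
        have hqS' : q ∈ S' := he' ▸ Eset_head_mem hz'
        have hqle : q ≤ p ∧ q ≠ p := by
          constructor
          · rcases Finset.mem_insert.mp hqS' with rfl | hx
            · omega
            · exact hple q (Finset.mem_of_mem_erase hx)
          · intro hc
            subst hc
            rcases Finset.mem_insert.mp hqS' with h | hx
            · omega
            · exact absurd rfl (Finset.ne_of_mem_erase hx)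
        have hqp : q < p := by omega
        have hqd : q ≤ d := hb' q (by simp)
        cases s with
        | nil =>
            have hE1 : Eset [q] = S' := he'
            have hvq : v ≤ q := by
              rw [← hE1] at hvS'
              simp only [Eset, Finset.mem_Icc] at hvS'
              omega
            rcases Nat.eq_or_lt_of_le hvq with rfl | hvlt
            · refine ⟨[p, v], Zg.two p v (by omega) hvp, ?_, ?_⟩
              · intro x hx; simp only [List.mem_cons] at hx
                rcases hx with rfl | hx
                · omega
                · simp at hx; omega
              · rw [show Eset [p, v] = insert p ((Finset.Icc 1 v).erase v) from rfl]
                rw [hSrec, ← hE1]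
                rfl
            · refine ⟨[p, v, q], Zg.cons p v q [] (by omega) hvp hqp (by simpa using hvlt) hz', ?_, ?_⟩
              · intro x hx; simp only [List.mem_cons] at hx
                rcases hx with rfl | rfl | hx
                · omega
                · omega
                · simp at hx; omega
              · rw [show Eset [p, v, q] = insert p ((Eset [q]).erase v) from rfl, hE1, hSrec]
        | cons v2 s' =>
            have hpl2 := Zg_pos_lt hz'
            have hv2nS' : v2 ∉ S' := by
              rw [← he']; exact Eset_v_not_mem hz'
            have hv2nS : v2 ∉ S := by
              intro hc
              apply hv2nS'
              rw [hS'_def]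
              exact Finset.mem_insert_of_mem (Finset.mem_erase_of_ne_of_mem (by omega) hc)
            have hvle2 : v ≤ v2 := by
              have : v2 ∈ Finset.Icc 1 p \ S := by
                simp only [Finset.mem_sdiff, Finset.mem_Icc]
                exact ⟨⟨by omega, by omega⟩, hv2nS⟩
              exact Finset.min'_le _ _ this
            have hvlt2 : v < v2 := by
              rcases Nat.eq_or_lt_of_le hvle2 with rfl | h
              · exact absurd hvS' hv2nS'
              · exact h
            refine ⟨p :: v :: q :: v2 :: s',
              Zg.cons p v q (v2 :: s') (by omega) hvp hqp (by simpa using hvlt2) hz', ?_, ?_⟩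
            · intro x hx
              simp only [List.mem_cons] at hx
              rcases hx with rfl | rfl | hx
              · omega
              · omega
              · exact hb' x (by simpa using hx)
            · rw [show Eset (p :: v :: q :: v2 :: s') = insert p ((Eset (q :: v2 :: s')).erase v) from rfl,
                 he', hSrec]
def Wp (d : ℕ) (y : List ℕ) : Prop :=
  y ≠ [] ∧ y.getD 0 0 = 0 ∧
  (∀ j, 1 ≤ j → j < y.length → 0 < y.getD j 0) ∧
  (∀ j, j < y.length → y.getD j 0 ≤ d) ∧
  (∀ j, 1 ≤ j → j + 1 < y.length →
    ¬ BetweenN (y.getD (j + 1) 0) (y.getD j 0) (y.getD (j - 1) 0)) ∧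
  (∀ j, 1 ≤ j → j + 2 < y.length →
    (¬ BetweenN (y.getD (j + 2) 0) (y.getD (j + 1) 0) (y.getD (j - 1) 0) ∨
     ¬ BetweenN (y.getD (j + 2) 0) (y.getD j 0) (y.getD (j - 1) 0)))

lemma getD_rev (l : List ℕ) {j : ℕ} (hj : j < l.length) :
    l.reverse.getD j 0 = l.getD (l.length - 1 - j) 0 := by
  rw [List.getD_eq_getElem _ _ (by simpa using hj), List.getD_eq_getElem _ _ (by omega)]
  exact List.getElem_reverse ..

lemma getLast?_cons_eq (a : ℕ) (t : List ℕ) : (a :: t).getLast? = some (t.getLastD a) := by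
  induction t generalizing a with
  | nil => rfl
  | cons b t ih => rw [List.getLast?_cons_cons, ih, List.getLastD_cons]

lemma liftSeq_iff_Wp (d : ℕ) (l : List ℕ) : LiftSeq d l ↔ Wp d l.reverse := by
  set n := l.length with hn
  have hrl : l.reverse.length = n := by simp [hn]
  constructor
  · rintro ⟨h1, h2, h3, h4, h5, h6⟩
    have hn1 : 1 ≤ n := by
      cases l with
      | nil => exact absurd rfl h1
      | cons a t => simp [hn]
    refine ⟨by simpa using h1, ?_, ?_, ?_, ?_, ?_⟩
    · rw [getD_rev l (by omega)]
      have hg := List.getLast?_eq_getElem? (l := l)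
      rw [h2] at hg
      rw [List.getD_eq_getElem?_getD]
      have e : n - 1 - 0 = l.length - 1 := by omega
      rw [e, ← hg]
      rfl
    · intro j hj1 hjn
      rw [hrl] at hjn
      rw [getD_rev l (by omega)]
      exact h3 _ (by omega)
    · intro j hjn
      rw [hrl] at hjn
      rw [getD_rev l (by omega)]
      exact h4 _ (by omega)
    · intro j hj1 hjn
      rw [hrl] at hjn
      rw [getD_rev l (by omega), getD_rev l (by omega), getD_rev l (by omega)]
      have e1 : n - 1 - (j + 1) = (n - 1 - j) - 1 := by omega
      have e2 : n - 1 - (j - 1) = (n - 1 - j) + 1 := by omega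
      rw [e1, e2]
      exact h5 (n - 1 - j) (by omega) (by omega)
    · intro j hj1 hjn
      rw [hrl] at hjn
      rw [getD_rev l (by omega), getD_rev l (by omega), getD_rev l (by omega),
          getD_rev l (by omega)]
      have e1 : n - 1 - (j + 2) = (n - 1 - j) - 2 := by omega
      have e2 : n - 1 - (j + 1) = (n - 1 - j) - 1 := by omega
      have e3 : n - 1 - (j - 1) = (n - 1 - j) + 1 := by omega
      rw [e1, e2, e3]
      exact h6 (n - 1 - j) (by omega) (by omega)
  · rintro ⟨h1, h2, h3, h4, h5, h6⟩
    have hn1 : 1 ≤ n := by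
      rw [← hrl]
      cases hl : l.reverse with
      | nil => exact absurd hl h1
      | cons a t => simp
    have hgd : ∀ i, i < n → l.getD i 0 = l.reverse.getD (n - 1 - i) 0 := by
      intro i hi
      rw [getD_rev l (by omega)]
      congr 1
      omega
    refine ⟨by intro hc; rw [hc] at hrl; simp [← hn] at hrl; omega, ?_, ?_, ?_, ?_, ?_⟩
    · rw [List.getLast?_eq_getElem?]
      rw [getD_rev l (by omega)] at h2
      rw [List.getD_eq_getElem?_getD] at h2
      have e : n - 1 - 0 = n - 1 := by omega
      rw [e] at h2
      rw [← hn]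
      cases hg : l[n-1]? with
      | none =>
          exfalso
          rw [List.getElem?_eq_none_iff] at hg
          omega
      | some x => rw [hg] at h2; simp at h2 ⊢; omega
    · intro i hi
      rw [hgd i (by omega)]
      exact h3 _ (by omega) (by omega)
    · intro i hi
      rw [hgd i (by omega)]
      exact h4 _ (by omega)
    · intro i hi1 hi
      rw [hgd (i-1) (by omega), hgd i (by omega), hgd (i+1) (by omega)]
      have e1 : n - 1 - (i - 1) = (n - 1 - i) + 1 := by omega
      have e2 : n - 1 - (i + 1) = (n - 1 - i) - 1 := by omega
      rw [e1, e2]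
      exact h5 (n - 1 - i) (by omega) (by omega)
    · intro i hi1 hi
      rw [hgd (i-2) (by omega), hgd (i-1) (by omega), hgd i (by omega), hgd (i+1) (by omega)]
      have e1 : n - 1 - (i - 2) = (n - 1 - i) + 2 := by omega
      have e2 : n - 1 - (i - 1) = (n - 1 - i) + 1 := by omega
      have e3 : n - 1 - (i + 1) = (n - 1 - i) - 1 := by omega
      rw [e1, e2, e3]
      exact h6 (n - 1 - i) (by omega) (by omega)
lemma Wp_cons4 (d p v q : ℕ) (s : List ℕ) :
    Wp d (0 :: p :: v :: q :: s) ↔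
      (0 < v ∧ v < p ∧ q < p ∧ v < s.headD q ∧ p ≤ d ∧ v ≤ d ∧ Wp d (0 :: q :: s)) := by
  have hyy' : ∀ k, (0 :: p :: v :: q :: s).getD (k + 3) 0 = (0 :: q :: s).getD (k + 1) 0 := by
    intro k; simp [List.getD_cons_succ]
  constructor
  · rintro ⟨w1, w2, w3, w4, w5, w6⟩
    simp only [List.length_cons] at w3 w4 w5 w6
    have hv : 0 < v := by simpa using w3 2 (by omega) (by omega)
    have hp : 0 < p := by simpa using w3 1 (by omega) (by omega)
    have hq : 0 < q := by simpa using w3 3 (by omega) (by omega)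
    have hvp : v < p := by
      have := w5 1 (by omega) (by omega)
      simp only [BetweenN] at this
      simp only [show (1:ℕ)+1 = 2 from rfl, show (1:ℕ)-1 = 0 from rfl] at this
      simp only [List.getD_cons_succ, List.getD_cons_zero] at this
      omega
    have hvq : v < q := by
      have := w5 2 (by omega) (by omega)
      simp only [show (2:ℕ)+1 = 3 from rfl, show (2:ℕ)-1 = 1 from rfl] at this
      simp only [List.getD_cons_succ, List.getD_cons_zero, BetweenN] at this
      omega
    have hqp : q < p := by
      have := w6 1 (by omega) (by omega)
      simp only [show (1:ℕ)+2 = 3 from rfl, show (1:ℕ)+1 = 2 from rfl,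
        show (1:ℕ)-1 = 0 from rfl] at this
      simp only [List.getD_cons_succ, List.getD_cons_zero, BetweenN] at this
      omega
    have hpd : p ≤ d := by simpa using w4 1 (by omega)
    have hvd : v ≤ d := by simpa using w4 2 (by omega)
    have hvs : v < s.headD q := by
      cases s with
      | nil => simpa using hvq
      | cons v2 s' =>
          have hv2q : v2 < q := by
            have := w5 3 (by omega) (by (try simp only [List.length_cons]); omega)
            simp only [show (3:ℕ)+1 = 4 from rfl, show (3:ℕ)-1 = 2 from rfl] at this
            simp only [List.getD_cons_succ, List.getD_cons_zero, BetweenN] at this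
            omega
          have := w6 2 (by omega) (by (try simp only [List.length_cons]); omega)
          simp only [show (2:ℕ)+2 = 4 from rfl, show (2:ℕ)+1 = 3 from rfl,
            show (2:ℕ)-1 = 1 from rfl] at this
          simp only [List.getD_cons_succ, List.getD_cons_zero, BetweenN] at this
          simp only [List.headD_cons]
          omega
    refine ⟨hv, hvp, hqp, hvs, hpd, hvd, by simp, by simp, ?_, ?_, ?_, ?_⟩
    · -- positivity
      intro j hj1 hj2
      simp only [List.length_cons] at hj2
      obtain ⟨k, rfl⟩ : ∃ k, j = k + 1 := ⟨j - 1, by omega⟩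
      rw [← hyy' k]
      exact w3 (k + 3) (by omega) (by omega)
    · -- bounds
      intro j hj
      simp only [List.length_cons] at hj
      cases j with
      | zero => simp
      | succ k =>
          rw [← hyy' k]
          exact w4 (k + 3) (by omega)
    · -- zig
      intro j hj1 hj2
      simp only [List.length_cons] at hj2
      match j, hj1, hj2 with
      | 1, _, hj2 =>
          obtain ⟨v2, s', rfl⟩ : ∃ v2 s', s = v2 :: s' := by
            cases s with
            | nil => exact absurd hj2 (by simp)
            | cons a b => exact ⟨a, b, rfl⟩
          have hv2q : v2 < q := by
            have := w5 3 (by omega) (by (try simp only [List.length_cons]); omega)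
            simp only [show (3:ℕ)+1 = 4 from rfl, show (3:ℕ)-1 = 2 from rfl] at this
            simp only [List.getD_cons_succ, List.getD_cons_zero, BetweenN] at this
            omega
          simp only [show (1:ℕ)+1 = 2 from rfl, show (1:ℕ)-1 = 0 from rfl]
          simp only [List.getD_cons_succ, List.getD_cons_zero, BetweenN]
          omega
      | (k+2), _, hj2 =>
          have := w5 (k + 4) (by omega) (by omega)
          simp only [show k+4+1 = (k+2)+3 from rfl, show k+4 = (k+1)+3 from rfl,
            show k+4-1 = k+3 from rfl] at this
          rw [hyy' (k+2), hyy' (k+1), hyy' k] at this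
          simpa only [show (k+2)+1 = (k+2)+1 from rfl, show (k+1)+1 = (k+2) from rfl,
            show k+1 = (k+2)-1 from rfl, show k+2-1+1 = k+2 from rfl] using this
    · -- zag
      intro j hj1 hj2
      simp only [List.length_cons] at hj2
      match j, hj1, hj2 with
      | 1, _, hj2 =>
          obtain ⟨v2, s', rfl⟩ : ∃ v2 s', s = v2 :: s' := by
            cases s with
            | nil => exact absurd hj2 (by simp)
            | cons a b => exact ⟨a, b, rfl⟩
          obtain ⟨v3, s'', rfl⟩ : ∃ v3 s'', s' = v3 :: s'' := by
            cases s' with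
            | nil => exact absurd hj2 (by simp)
            | cons a b => exact ⟨a, b, rfl⟩
          have hv2 : 0 < v2 := by simpa using w3 4 (by omega) (by omega)
          simp only [List.headD_cons] at hvs
          have := w6 3 (by omega) (by (try simp only [List.length_cons]); omega)
          simp only [show (3:ℕ)+2 = 5 from rfl, show (3:ℕ)+1 = 4 from rfl,
            show (3:ℕ)-1 = 2 from rfl] at this
          simp only [List.getD_cons_succ, List.getD_cons_zero, BetweenN] at this
          simp only [show (1:ℕ)+2 = 3 from rfl, show (1:ℕ)+1 = 2 from rfl,
            show (1:ℕ)-1 = 0 from rfl]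
          simp only [List.getD_cons_succ, List.getD_cons_zero, BetweenN]
          omega
      | (k+2), _, hj2 =>
          have := w6 (k + 4) (by omega) (by omega)
          simp only [show k+4+2 = (k+3)+3 from rfl, show k+4+1 = (k+2)+3 from rfl,
            show k+4 = (k+1)+3 from rfl, show k+4-1 = k+3 from rfl] at this
          rw [hyy' (k+3), hyy' (k+2), hyy' (k+1), hyy' k] at this
          simpa only [show (k+2)+2 = (k+3)+1 from rfl, show (k+2)+1 = (k+2)+1 from rfl,
            show k+1 = (k+2)-1 from rfl, show k+2-1+1 = k+2 from rfl] using this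
  · rintro ⟨hv, hvp, hqp, hvs, hpd, hvd, w1, w2, w3, w4, w5, w6⟩
    simp only [List.length_cons] at w3 w4 w5 w6
    have hq : 0 < q := by simpa using w3 1 (by omega) (by omega)
    have hvq : v < q := by
      cases s with
      | nil => simpa using hvs
      | cons v2 s' =>
          have hv2q : v2 < q := by
            have := w5 1 (by omega) (by (try simp only [List.length_cons]); omega)
            simp only [show (1:ℕ)+1 = 2 from rfl, show (1:ℕ)-1 = 0 from rfl] at this
            simp only [List.getD_cons_succ, List.getD_cons_zero, BetweenN] at this
            omega
          simp only [List.headD_cons] at hvs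
          omega
    refine ⟨by simp, by simp, ?_, ?_, ?_, ?_⟩
    · intro j hj1 hj2
      simp only [List.length_cons] at hj2
      match j, hj1, hj2 with
      | 1, _, _ => simpa using Nat.lt_trans hv hvp
      | 2, _, _ => simpa using hv
      | (k+3), _, hj2 =>
          rw [hyy' k]
          exact w3 (k+1) (by omega) (by omega)
    · intro j hj
      simp only [List.length_cons] at hj
      match j with
      | 0 => simp
      | 1 => simpa using hpd
      | 2 => simpa using hvd
      | (k+3) =>
          rw [hyy' k]
          exact w4 (k+1) (by omega)
    · -- zig
      intro j hj1 hj2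
      simp only [List.length_cons] at hj2
      match j, hj1, hj2 with
      | 1, _, _ =>
          simp only [show (1:ℕ)+1 = 2 from rfl, show (1:ℕ)-1 = 0 from rfl]
          simp only [List.getD_cons_succ, List.getD_cons_zero, BetweenN]
          omega
      | 2, _, _ =>
          simp only [show (2:ℕ)+1 = 3 from rfl, show (2:ℕ)-1 = 1 from rfl]
          simp only [List.getD_cons_succ, List.getD_cons_zero, BetweenN]
          omega
      | 3, _, hj2 =>
          obtain ⟨v2, s', rfl⟩ : ∃ v2 s', s = v2 :: s' := by
            cases s with
            | nil => exact absurd hj2 (by simp)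
            | cons a b => exact ⟨a, b, rfl⟩
          have hv2q : v2 < q := by
            have := w5 1 (by omega) (by (try simp only [List.length_cons]); omega)
            simp only [show (1:ℕ)+1 = 2 from rfl, show (1:ℕ)-1 = 0 from rfl] at this
            simp only [List.getD_cons_succ, List.getD_cons_zero, BetweenN] at this
            omega
          simp only [show (3:ℕ)+1 = 4 from rfl, show (3:ℕ)-1 = 2 from rfl]
          simp only [List.getD_cons_succ, List.getD_cons_zero, BetweenN]
          omega
      | (k+4), _, hj2 =>
          have := w5 (k+2) (by omega) (by omega)
          rw [show k+2+1 = (k+2)+1 from rfl, show (k+2:ℕ)-1 = k+1 from rfl] at this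
          rw [← hyy' (k+2), ← hyy' (k+1), ← hyy' k] at this
          simpa only [show (k+2)+3 = (k+4)+1 from rfl, show (k+1)+3 = k+4 from rfl,
            show k+3 = (k+4)-1 from rfl] using this
    · -- zag
      intro j hj1 hj2
      simp only [List.length_cons] at hj2
      match j, hj1, hj2 with
      | 1, _, _ =>
          right
          simp only [show (1:ℕ)+2 = 3 from rfl, show (1:ℕ)+1 = 2 from rfl,
            show (1:ℕ)-1 = 0 from rfl]
          simp only [List.getD_cons_succ, List.getD_cons_zero, BetweenN]
          omega
      | 2, _, hj2 =>
          obtain ⟨v2, s', rfl⟩ : ∃ v2 s', s = v2 :: s' := by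
            cases s with
            | nil => exact absurd hj2 (by simp)
            | cons a b => exact ⟨a, b, rfl⟩
          right
          simp only [List.headD_cons] at hvs
          simp only [show (2:ℕ)+2 = 4 from rfl, show (2:ℕ)+1 = 3 from rfl,
            show (2:ℕ)-1 = 1 from rfl]
          simp only [List.getD_cons_succ, List.getD_cons_zero, BetweenN]
          omega
      | 3, _, hj2 =>
          obtain ⟨v2, s', rfl⟩ : ∃ v2 s', s = v2 :: s' := by
            cases s with
            | nil => exact absurd hj2 (by simp)
            | cons a b => exact ⟨a, b, rfl⟩
          obtain ⟨v3, s'', rfl⟩ : ∃ v3 s'', s' = v3 :: s'' := by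
            cases s' with
            | nil => exact absurd hj2 (by simp)
            | cons a b => exact ⟨a, b, rfl⟩
          have hv2 : 0 < v2 := by simpa using w3 2 (by omega) (by omega)
          have hv2q : v2 < q := by
            have := w5 1 (by omega) (by (try simp only [List.length_cons]); omega)
            simp only [show (1:ℕ)+1 = 2 from rfl, show (1:ℕ)-1 = 0 from rfl] at this
            simp only [List.getD_cons_succ, List.getD_cons_zero, BetweenN] at this
            omega
          have := w6 1 (by omega) (by (try simp only [List.length_cons]); omega)
          simp only [show (1:ℕ)+2 = 3 from rfl, show (1:ℕ)+1 = 2 from rfl,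
            show (1:ℕ)-1 = 0 from rfl] at this
          simp only [List.getD_cons_succ, List.getD_cons_zero, BetweenN] at this
          simp only [show (3:ℕ)+2 = 5 from rfl, show (3:ℕ)+1 = 4 from rfl,
            show (3:ℕ)-1 = 2 from rfl]
          simp only [List.getD_cons_succ, List.getD_cons_zero, BetweenN]
          simp only [List.headD_cons] at hvs
          omega
      | (k+4), _, hj2 =>
          have := w6 (k+2) (by omega) (by omega)
          rw [show k+2+2 = (k+3)+1 from rfl, show k+2+1 = (k+2)+1 from rfl,
            show (k+2:ℕ) = (k+1)+1 from rfl, show (k+2:ℕ)-1 = k+1 from rfl] at this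
          rw [← hyy' (k+3), ← hyy' (k+2), ← hyy' (k+1), ← hyy' k] at this
          rw [show (k+3)+3 = (k+4)+2 from rfl, show (k+2)+3 = (k+4)+1 from rfl,
            show (k+1)+3 = k+4 from rfl, show (k:ℕ)+3 = (k+4)-1 from rfl] at this
          exact this
lemma Wp_iff_Zg (d : ℕ) (t : List ℕ) : Wp d (0 :: t) ↔ (Zg t ∧ ∀ x ∈ t, x ≤ d) := by
  suffices h : ∀ n (t : List ℕ), t.length = n → (Wp d (0 :: t) ↔ (Zg t ∧ ∀ x ∈ t, x ≤ d)) from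
    h _ t rfl
  intro n
  induction n using Nat.strong_induction_on with
  | _ n ih =>
  intro t hn
  match t with
  | [] =>
      constructor
      · intro _; exact ⟨Zg.nil, by simp⟩
      · rintro ⟨-, -⟩
        refine ⟨by simp, by simp, ?_, ?_, ?_, ?_⟩
        · intro j hj1 hj2; simp at hj2; omega
        · intro j hj
          have hj0 : j = 0 := by simp only [List.length_cons, List.length_nil] at hj; omega
          subst hj0; simp
        · intro j hj1 hj2; exact absurd hj2 (by simp)
        · intro j hj1 hj2; exact absurd hj2 (by simp)
  | [m] =>
      constructor
      · rintro ⟨w1, w2, w3, w4, w5, w6⟩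
        have h1 : 0 < m := by simpa using w3 1 (by omega) (by simp)
        have h2 : m ≤ d := by simpa using w4 1 (by simp)
        exact ⟨Zg.one m h1, by simpa using h2⟩
      · rintro ⟨hz, hb⟩
        have h1 : 0 < m := by cases hz with | one _ h => exact h
        have h2 : m ≤ d := hb m (by simp)
        refine ⟨by simp, by simp, ?_, ?_, ?_, ?_⟩
        · intro j hj1 hj2
          simp only [List.length_cons, List.length_nil] at hj2
          have hj0 : j = 1 := by omega
          subst hj0
          simpa using h1
        · intro j hj
          simp only [List.length_cons, List.length_nil] at hj
          match j, hj with
          | 0, _ => simp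
          | 1, _ => simpa using h2
        · intro j hj1 hj2
          simp only [List.length_cons, List.length_nil] at hj2
          omega
        · intro j hj1 hj2
          simp only [List.length_cons, List.length_nil] at hj2
          omega
  | [p, v] =>
      constructor
      · rintro ⟨w1, w2, w3, w4, w5, w6⟩
        have h1 : 0 < p := by simpa using w3 1 (by omega) (by simp)
        have h2 : 0 < v := by simpa using w3 2 (by omega) (by simp)
        have h3 : p ≤ d := by simpa using w4 1 (by simp)
        have h4 : v ≤ d := by simpa using w4 2 (by simp)
        have h5 : v < p := by
          have := w5 1 (by omega) (by simp)
          simp only [show (1:ℕ)+1 = 2 from rfl, show (1:ℕ)-1 = 0 from rfl] at this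
          simp only [List.getD_cons_succ, List.getD_cons_zero, BetweenN] at this
          omega
        refine ⟨Zg.two p v h2 h5, ?_⟩
        intro x hx; simp at hx; rcases hx with rfl | rfl <;> omega
      · rintro ⟨hz, hb⟩
        have h2 : 0 < v ∧ v < p := Zg_pos_lt hz
        have h3 : p ≤ d := hb p (by simp)
        have h4 : v ≤ d := hb v (by simp)
        refine ⟨by simp, by simp, ?_, ?_, ?_, ?_⟩
        · intro j hj1 hj2
          simp only [List.length_cons, List.length_nil] at hj2
          match j, hj1, hj2 with
          | 1, _, _ => simpa using (by omega : 0 < p)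
          | 2, _, _ => simpa using h2.1
        · intro j hj
          simp only [List.length_cons, List.length_nil] at hj
          match j, hj with
          | 0, _ => simp
          | 1, _ => simpa using h3
          | 2, _ => simpa using h4
        · intro j hj1 hj2
          simp only [List.length_cons, List.length_nil] at hj2
          have hj0 : j = 1 := by omega
          subst hj0
          simp only [show (1:ℕ)+1 = 2 from rfl, show (1:ℕ)-1 = 0 from rfl]
          simp only [List.getD_cons_succ, List.getD_cons_zero, BetweenN]
          omega
        · intro j hj1 hj2
          simp only [List.length_cons, List.length_nil] at hj2
          omega
  | p :: v :: q :: s =>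
      rw [Wp_cons4]
      have ihq := ih (q :: s).length (by simp only [List.length_cons] at hn ⊢; omega) (q :: s) rfl
      constructor
      · rintro ⟨hv, hvp, hqp, hvs, hpd, hvd, hw⟩
        obtain ⟨hz, hb⟩ := ihq.mp hw
        refine ⟨Zg.cons p v q s hv hvp hqp hvs hz, ?_⟩
        intro x hx
        simp only [List.mem_cons] at hx
        rcases hx with rfl | rfl | hx
        · exact hpd
        · exact hvd
        · exact hb x (by simpa using hx)
      · rintro ⟨hz, hb⟩
        cases hz with
        | cons _ _ _ _ hv hvp hqp hvs hz' =>
            refine ⟨hv, hvp, hqp, hvs, hb p (by simp), hb v (by simp), ?_⟩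
            apply ihq.mpr
            exact ⟨hz', fun x hx => hb x (by simp [hx])⟩
lemma liftSeq_struct {d : ℕ} {l : List ℕ} (h : LiftSeq d l) :
    l.reverse = 0 :: l.reverse.tail ∧ Zg l.reverse.tail ∧ ∀ x ∈ l.reverse.tail, x ≤ d := by
  have hw := (liftSeq_iff_Wp d l).mp h
  obtain ⟨h1, h2, -⟩ := hw
  have hy : l.reverse = 0 :: l.reverse.tail := by
    cases hl : l.reverse with
    | nil => exact absurd hl h1
    | cons a r =>
        rw [hl] at h2
        simp only [List.getD_cons_zero] at h2
        rw [h2]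
        rfl
  have hw' : Wp d (0 :: l.reverse.tail) := by
    have := (liftSeq_iff_Wp d l).mp h
    rwa [hy] at this
  exact ⟨hy, (Wp_iff_Zg d _).mp hw'⟩

lemma headI_of_head? {l : List ℕ} {x : ℕ} (h : l.head? = some x) : l.headI = x := by
  cases l <;> simp_all

theorem stmt_18 (d : ℕ) :
    ∃ f : {l : List ℕ // LiftSeq d l} → {S : Finset ℕ // S ⊆ Finset.Icc 1 d},
      Function.Bijective f ∧
      ∀ l : {l : List ℕ // LiftSeq d l}, ((f l : Finset ℕ)).card = (l : List ℕ).headI := by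
  refine ⟨fun l => ⟨Eset l.val.reverse.tail, ?_⟩, ⟨?_, ?_⟩, ?_⟩
  · obtain ⟨-, hz, hb⟩ := liftSeq_struct l.2
    exact Eset_subset hz hb
  · -- injective
    rintro ⟨l1, h1⟩ ⟨l2, h2⟩ he
    simp only [Subtype.mk.injEq] at he ⊢
    obtain ⟨hy1, hz1, -⟩ := liftSeq_struct h1
    obtain ⟨hy2, hz2, -⟩ := liftSeq_struct h2
    have ht : l1.reverse.tail = l2.reverse.tail := Eset_inj hz1 hz2 he
    have : l1.reverse = l2.reverse := by rw [hy1, hy2, ht]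
    simpa using congrArg List.reverse this
  · -- surjective
    rintro ⟨S, hS⟩
    obtain ⟨t, hz, hb, he⟩ := Eset_surj d S hS
    have hrev : ((0 :: t).reverse).reverse = 0 :: t := by simp
    have hl : LiftSeq d ((0 :: t).reverse) := by
      rw [liftSeq_iff_Wp, hrev]
      exact (Wp_iff_Zg d t).mpr ⟨hz, hb⟩
    refine ⟨⟨(0 :: t).reverse, hl⟩, ?_⟩
    simp only [Subtype.mk.injEq]
    rw [hrev]
    simpa using he
  · rintro ⟨l, h⟩
    obtain ⟨hy, hz, -⟩ := liftSeq_struct h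
    simp only
    rw [Eset_card hz]
    have hh : l.head? = some (l.reverse.tail.getLastD 0) := by
      rw [← List.getLast?_reverse, hy, getLast?_cons_eq]
      rfl
    exact (headI_of_head? hh).symm
end

section
/- Fix an integer d ≥ 0 and a nonconstant zigzag sequence x₁,...,xₙ of integers in {0,...,d} with xₙ = 0 and x_i > 0 for 1 ≤ i ≤ n-1 (a nonredundant lifting index sequence). Then, with p as in the unimodality theorem, the interleaving inequalities hold: if n is even, 0 < x_{n-2} < x_{n-4} < ⋯ < x₂ < x₁ < x₃ < ⋯ < x_{n-1}; if n is odd, 0 < x_{n-2} < x_{n-4} < ⋯ < x₃ < x₁ < x₂ < x₄ < ⋯ < x_{n-1}. -/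
theorem stmt_19 (d n : ℕ) (x : ℕ → ℕ) (hn : 1 ≤ n)
    (hrange : ∀ i, 1 ≤ i → i ≤ n → x i ≤ d)
    (hlast : x n = 0)
    (hpos : ∀ i, 1 ≤ i → i ≤ n - 1 → 0 < x i)
    (hzz1 : ∀ i, 2 ≤ i → i ≤ n - 1 →
      ¬ BetweenN (x (i - 1)) (x i) (x (i + 1)))
    (hzz2 : ∀ i, 3 ≤ i → i ≤ n - 1 →
      (¬ BetweenN (x (i - 2)) (x (i - 1)) (x (i + 1)) ∨
       ¬ BetweenN (x (i - 2)) (x i) (x (i + 1))))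
    (hnonconst : ¬ (∀ i j, 1 ≤ i → i ≤ n → 1 ≤ j → j ≤ n → x i = x j)) :
    (Even n →
      ((2 + 2 ≤ n → x 2 < x 1) ∧
       (∀ i, 2 ≤ i → i + 2 ≤ n - 2 → Even i → x (i + 2) < x i) ∧
       (∀ i, 1 ≤ i → i + 2 ≤ n - 1 → Odd i → x i < x (i + 2)))) ∧
    (Odd n →
      ((3 ≤ n → x 1 < x 2) ∧
       (∀ i, 1 ≤ i → i + 2 ≤ n - 2 → Odd i → x (i + 2) < x i) ∧
       (∀ i, 2 ≤ i → i + 2 ≤ n - 1 → Even i → x i < x (i + 2)))) := by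
  -- n ≥ 2
  have hn2 : 2 ≤ n := by
    by_contra h
    have hn1 : n = 1 := by omega
    apply hnonconst
    intro i j hi hij hj hjj
    have : i = 1 := by omega
    have : j = 1 := by omega
    subst_vars
    rfl
  -- strict alternation: at distance m from n-1 (so i + m = n - 1),
  -- if m is even then x (i+1) < x i (peak), if m is odd then x i < x (i+1) (valley).
  have alt : ∀ m i, 1 ≤ i → i + m = n - 1 →
      (m % 2 = 0 → x (i + 1) < x i) ∧ (m % 2 = 1 → x i < x (i + 1)) := by
    intro m
    induction m with
    | zero =>
      intro i h1 h2
      refine ⟨fun _ => ?_, fun h => by omega⟩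
      have hi : i + 1 = n := by omega
      rw [hi, hlast]
      exact hpos i h1 (by omega)
    | succ m ih =>
      intro i h1 h2
      have ih' := ih (i + 1) (by omega) (by omega)
      have hz := hzz1 (i + 1) (by omega) (by omega)
      have e1 : i + 1 - 1 = i := by omega
      have e2 : i + 1 + 1 = i + 2 := by omega
      rw [e1, e2] at hz
      rw [e2] at ih'
      unfold BetweenN at hz
      omega
  -- interleaving: for i + m = n - 2,
  -- valley at i ⇒ x (i+2) < x i; peak at i ⇒ x i < x (i+2)
  have ilv : ∀ m i, 1 ≤ i → i + m = n - 2 →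
      (x i < x (i + 1) → x (i + 2) < x i) ∧ (x (i + 1) < x i → x i < x (i + 2)) := by
    intro m
    induction m with
    | zero =>
      intro i h1 h2
      have ha := alt 1 i h1 (by omega)
      constructor
      · intro _
        have hi : i + 2 = n := by omega
        rw [hi, hlast]
        exact hpos i h1 (by omega)
      · intro h
        have := ha.2 (by omega)
        omega
    | succ m ih =>
      intro i h1 h2
      have ih' := ih (i + 1) (by omega) (by omega)
      have a0 := alt (m + 2) i h1 (by omega)
      have a1 := alt (m + 1) (i + 1) (by omega) (by omega)
      have a2 := alt m (i + 2) (by omega) (by omega)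
      have hz := hzz2 (i + 2) (by omega) (by omega)
      have e1 : i + 2 - 2 = i := by omega
      have e2 : i + 2 - 1 = i + 1 := by omega
      have e3 : i + 2 + 1 = i + 3 := by omega
      have e4 : i + 1 + 1 = i + 2 := by omega
      have e5 : i + 1 + 2 = i + 3 := by omega
      rw [e1, e2, e3] at hz
      rw [e4, e5] at ih'
      rw [e4] at a1
      rw [e3] at a2
      unfold BetweenN at hz
      omega
  constructor
  · intro hEven
    have hne : n % 2 = 0 := Nat.even_iff.mp hEven
    refine ⟨?_, ?_, ?_⟩
    · intro h4
      have ha := (alt (n - 2) 1 le_rfl (by omega)).1 (by omega)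
      have e : (1 : ℕ) + 1 = 2 := by norm_num
      rw [e] at ha
      exact ha
    · intro i h2 hle hEi
      have hi2 : i % 2 = 0 := Nat.even_iff.mp hEi
      have hv := (alt (n - 1 - i) i (by omega) (by omega)).2 (by omega)
      exact (ilv (n - 2 - i) i (by omega) (by omega)).1 hv
    · intro i h1 hle hOi
      have hi2 : i % 2 = 1 := Nat.odd_iff.mp hOi
      have hv := (alt (n - 1 - i) i (by omega) (by omega)).1 (by omega)
      exact (ilv (n - 2 - i) i (by omega) (by omega)).2 hv
  · intro hOdd
    have hne : n % 2 = 1 := Nat.odd_iff.mp hOdd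
    refine ⟨?_, ?_, ?_⟩
    · intro h3
      have ha := (alt (n - 2) 1 le_rfl (by omega)).2 (by omega)
      have e : (1 : ℕ) + 1 = 2 := by norm_num
      rw [e] at ha
      exact ha
    · intro i h1 hle hOi
      have hi2 : i % 2 = 1 := Nat.odd_iff.mp hOi
      have hv := (alt (n - 1 - i) i (by omega) (by omega)).2 (by omega)
      exact (ilv (n - 2 - i) i (by omega) (by omega)).1 hv
    · intro i h2 hle hEi
      have hi2 : i % 2 = 0 := Nat.even_iff.mp hEi
      have hv := (alt (n - 1 - i) i (by omega) (by omega)).1 (by omega)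
      exact (ilv (n - 2 - i) i (by omega) (by omega)).2 hv
end
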